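/- arXiv:2211.16545 — 2 statements merged into one kernel-verified Lean document; each statement's English description precedes it below -/
import Mathlib

section
/- Let ι be an index set of cardinality 𝔠 = 2^{ℵ₀}. There exists a subset N of ℝ^ι (the product of ι copies of ℝ with the product topology) such that N is a closed copy of ℕ in ℝ^ι, N is C*-embedded in ℝ^ι, but N is not C-embedded in ℝ^ι. -/
open Set Topology

/-- A subset `A` of a topological space `X` is *C-embedded* if every continuous
real-valued function on `A` extends to a continuous real-valued function on `X`. -/
def CEmbedded {X : Type*} [TopologicalSpace X] (A : Set X) : Prop :=
  ∀ f : C(A, ℝ), ∃ g : C(X, ℝ), ∀ a : A, g ↑a = f a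

/-- A subset `A` of a topological space `X` is *C*-embedded* if every *bounded* continuous
real-valued function on `A` extends to a continuous real-valued function on `X`. -/
def CstarEmbedded {X : Type*} [TopologicalSpace X] (A : Set X) : Prop :=
  ∀ f : C(A, ℝ), (∃ M : ℝ, ∀ a : A, |f a| ≤ M) → ∃ g : C(X, ℝ), ∀ a : A, g ↑a = f a
/-- `N` is a *closed copy of ℕ* in `X`: a countably infinite closed subset all of whose
points are isolated in the subspace topology. -/
def ClosedCopyOfNat {X : Type*} [TopologicalSpace X] (N : Set X) : Prop :=
  N.Countable ∧ N.Infinite ∧ IsClosed N ∧ DiscreteTopology N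

namespace Statement18Proof

open Filter

noncomputable section



variable {ι : Type*}

noncomputable def stepFun (c : ι → ℝ) (P : Finset (ℚ × ℚ × ℚ)) : ι → ℝ :=
  fun i => ∑ t ∈ P, if (t.1 : ℝ) < c i ∧ c i < (t.2.1 : ℝ) then (t.2.2 : ℝ) else 0

lemma exists_sep (c : ι → ℝ) (hc : Function.Injective c) (F : Finset ι) :
    ∃ ρ > (0:ℝ), ∀ i ∈ F, ∀ j ∈ F, i ≠ j → ρ ≤ |c i - c j| := by
  classical
  set T := ((F ×ˢ F).filter (fun p => p.1 ≠ p.2)).image (fun p => |c p.1 - c p.2|) with hT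
  rcases T.eq_empty_or_nonempty with hE | hNE
  · refine ⟨1, one_pos, fun i hi j hj hij => ?_⟩
    exfalso
    have : |c i - c j| ∈ T := by
      refine Finset.mem_image.2 ⟨(i, j), ?_, rfl⟩
      simp [Finset.mem_filter, Finset.mem_product, hi, hj, hij]
    simp [hE] at this
  · refine ⟨T.min' hNE, ?_, fun i hi j hj hij => ?_⟩
    · have hmem := T.min'_mem hNE
      set m := T.min' hNE with hm
      rw [hT] at hmem
      simp only [Finset.mem_image, Finset.mem_filter, Finset.mem_product] at hmem
      obtain ⟨p, ⟨⟨-, -⟩, hne⟩, hv⟩ := hmem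
      rw [gt_iff_lt, ← hv, abs_pos, sub_ne_zero]
      exact fun h => hne (hc h)
    · apply Finset.min'_le
      refine Finset.mem_image.2 ⟨(i, j), ?_, rfl⟩
      simp [Finset.mem_filter, Finset.mem_product, hi, hj, hij]

lemma dense_range_stepFun (c : ι → ℝ) (hc : Function.Injective c) :
    Dense (Set.range (stepFun c)) := by
  classical
  rw [dense_iff_inter_open]
  rintro U hU ⟨x, hx⟩
  rcases (isOpen_pi_iff.1 hU) x hx with ⟨F, u, hu, hsub⟩
  obtain ⟨ρ, hρ, hsep⟩ := exists_sep c hc F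
  -- rational values in each u i
  have hV : ∀ i ∈ F, ∃ v : ℚ, (v : ℝ) ∈ u i := by
    intro i hi
    obtain ⟨ε, hε, hball⟩ := Metric.isOpen_iff.1 (hu i hi).1 (x i) (hu i hi).2
    obtain ⟨v, hv1, hv2⟩ := exists_rat_btwn (sub_lt_self (x i) hε)
    refine ⟨v, hball ?_⟩
    rw [Metric.mem_ball, Real.dist_eq, abs_sub_lt_iff]
    constructor <;> linarith
  have hA : ∀ i : ι, ∃ a : ℚ, c i - ρ/2 < (a:ℝ) ∧ (a:ℝ) < c i :=
    fun i => exists_rat_btwn (by linarith)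
  have hB : ∀ i : ι, ∃ b : ℚ, c i < (b:ℝ) ∧ (b:ℝ) < c i + ρ/2 :=
    fun i => exists_rat_btwn (by linarith)
  choose A hA1 hA2 using hA
  choose B hB1 hB2 using hB
  set V : ι → ℚ := fun i => if h : i ∈ F then (hV i h).choose else 0 with hVdef
  have hVmem : ∀ i ∈ F, ((V i : ℝ)) ∈ u i := by
    intro i hi
    simp only [hVdef, dif_pos hi]
    exact (hV i hi).choose_spec
  set P : Finset (ℚ × ℚ × ℚ) := F.image (fun j => (A j, B j, V j)) with hP
  have key : ∀ i ∈ F, stepFun c P i = (V i : ℝ) := by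
    intro i hi
    rw [stepFun]
    rw [Finset.sum_eq_single_of_mem ((A i, B i, V i) : ℚ × ℚ × ℚ)
      (Finset.mem_image.2 ⟨i, hi, rfl⟩)]
    · rw [if_pos ⟨hA2 i, hB1 i⟩]
    · rintro t ht hne
      simp only [Finset.mem_image] at ht
      obtain ⟨j, hj, rfl⟩ := ht
      rw [if_neg]
      rintro ⟨h1, h2⟩
      have hij : i ≠ j := by rintro rfl; exact hne rfl
      have : |c i - c j| < ρ := by
        have l1 := hA1 j
        have l2 := hB2 j
        rw [abs_sub_lt_iff]
        constructor <;> linarith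
      exact absurd this (not_lt.2 (hsep i hi j hj hij))
  refine ⟨stepFun c P, ?_, ⟨P, rfl⟩⟩
  apply hsub
  intro i hi
  rw [key i hi]
  exact hVmem i hi

theorem exists_countable_dep (c : ι → ℝ) (hc : Function.Injective c)
    (g : (ι → ℝ) → ℝ) (hg : Continuous g) :
    ∃ S : Set ι, S.Countable ∧ ∀ x y : ι → ℝ, (∀ i ∈ S, x i = y i) → g x = g y := by
  classical
  set S : Set ι := {i | ∃ x y : ι → ℝ, (∀ j, j ≠ i → x j = y j) ∧ g x ≠ g y} with hS
  have hnotS : ∀ i, i ∉ S → ∀ x y : ι → ℝ, (∀ j, j ≠ i → x j = y j) → g x = g y := by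
    intro i hi x y h
    by_contra hne
    exact hi ⟨x, y, h, hne⟩
  refine ⟨S, ?_, ?_⟩
  · -- S is countable
    by_contra hSc
    set D := Set.range (stepFun c) with hD
    have hDc : D.Countable := Set.countable_range _
    have hDd : Dense D := dense_range_stepFun c hc
    have claim : ∀ i ∈ S, ∃ (m : ℕ) (d : ι → ℝ), d ∈ D ∧ ∃ a b : ℝ,
        1 / (2*((m:ℝ)+1)) < |g (Function.update d i a) - g (Function.update d i b)| := by
      intro i hiS
      obtain ⟨x, y, hdiff, hne⟩ := hiS
      obtain ⟨m, hm⟩ := exists_nat_one_div_lt (abs_pos.2 (sub_ne_zero.2 hne))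
      set ε' : ℝ := 1 / (((m:ℝ)+1)*4) with hε'
      have hMpos : (0:ℝ) < (m:ℝ)+1 := by positivity
      have hε'pos : (0:ℝ) < ε' := by positivity
      have hB₁ : g ⁻¹' Metric.ball (g x) ε' ∈ 𝓝 x := hg.tendsto x (Metric.ball_mem_nhds _ hε'pos)
      have hB₂ : g ⁻¹' Metric.ball (g y) ε' ∈ 𝓝 y := hg.tendsto y (Metric.ball_mem_nhds _ hε'pos)
      rw [nhds_pi] at hB₁ hB₂
      obtain ⟨I₁, t₁, ht₁, hsub₁⟩ := Filter.mem_pi'.1 hB₁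
      obtain ⟨I₂, t₂, ht₂, hsub₂⟩ := Filter.mem_pi'.1 hB₂
      set W : Set (ι → ℝ) :=
        ⋂ j ∈ (I₁ ∪ I₂).erase i, (fun w : ι → ℝ => w j) ⁻¹' (t₁ j ∩ t₂ j) with hW
      have hWnhds : W ∈ 𝓝 x := by
        rw [hW, Filter.biInter_finset_mem]
        intro j hj
        have hji : j ≠ i := (Finset.mem_erase.1 hj).1
        have h1 : t₁ j ∈ 𝓝 (x j) := ht₁ j
        have h2 : t₂ j ∈ 𝓝 (x j) := by rw [hdiff j hji]; exact ht₂ j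
        exact (continuous_apply j).continuousAt.preimage_mem_nhds (inter_mem h1 h2)
      obtain ⟨d, hdW, hdD⟩ := mem_closure_iff_nhds.1 (hDd x) W hWnhds
      have hdmem : ∀ j ∈ (I₁ ∪ I₂), j ≠ i → d j ∈ t₁ j ∩ t₂ j := by
        intro j hj hji
        have := Set.mem_iInter₂.1 hdW j (Finset.mem_erase.2 ⟨hji, hj⟩)
        exact this
      refine ⟨m, d, hdD, x i, y i, ?_⟩
      have hu : Function.update d i (x i) ∈ g ⁻¹' Metric.ball (g x) ε' := by
        apply hsub₁
        intro j hj
        rcases eq_or_ne j i with rfl | hji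
        · rw [Function.update_self]
          exact mem_of_mem_nhds (ht₁ j)
        · rw [Function.update_of_ne hji]
          exact (hdmem j (Finset.mem_union_left _ hj) hji).1
      have hv : Function.update d i (y i) ∈ g ⁻¹' Metric.ball (g y) ε' := by
        apply hsub₂
        intro j hj
        rcases eq_or_ne j i with rfl | hji
        · rw [Function.update_self]
          exact mem_of_mem_nhds (ht₂ j)
        · rw [Function.update_of_ne hji]
          exact (hdmem j (Finset.mem_union_right _ hj) hji).2
      rw [Set.mem_preimage, Metric.mem_ball, Real.dist_eq] at hu hv
      have tri1 : |g x - g y| ≤ |g x - g (Function.update d i (x i))| +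
          |g (Function.update d i (x i)) - g y| := abs_sub_le _ _ _
      have tri2 : |g (Function.update d i (x i)) - g y| ≤
          |g (Function.update d i (x i)) - g (Function.update d i (y i))| +
          |g (Function.update d i (y i)) - g y| := abs_sub_le _ _ _
      have comm1 : |g x - g (Function.update d i (x i))| =
          |g (Function.update d i (x i)) - g x| := abs_sub_comm _ _
      have key : 1 / (2*((m:ℝ)+1)) = 1/((m:ℝ)+1) - 2 * ε' := by
        rw [hε']; field_simp; ring
      linarith
    choose md dd hdD haux using claim
    haveI : Countable ↥D := hDc.to_subtype
    set φ : ↥S → ℕ × ↥D := fun s => (md s.1 s.2, ⟨dd s.1 s.2, hdD s.1 s.2⟩) with hφ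
    have hfib : ∃ p : ℕ × ↥D, ¬ (φ ⁻¹' {p}).Countable := by
      by_contra h
      push_neg at h
      have huniv : (Set.univ : Set ↥S).Countable := by
        have : (Set.univ : Set ↥S) = ⋃ p : ℕ × ↥D, φ ⁻¹' {p} := by
          ext s; simp
        rw [this]
        exact Set.countable_iUnion (fun p => h p)
      rw [Set.countable_univ_iff] at huniv
      exact hSc (Set.countable_coe_iff.2 huniv)
    obtain ⟨⟨m₀, d₀⟩, hfib⟩ := hfib
    have hinf : (φ ⁻¹' {(m₀, d₀)}).Infinite := fun hfin => hfib hfin.countable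
    set ε₀ : ℝ := 1 / (((m₀:ℝ)+1)*4) with hε₀
    have hM₀pos : (0:ℝ) < (m₀:ℝ)+1 := by positivity
    have hε₀pos : (0:ℝ) < ε₀ := by positivity
    have hB₀ : g ⁻¹' Metric.ball (g d₀.1) ε₀ ∈ 𝓝 d₀.1 :=
      hg.tendsto d₀.1 (Metric.ball_mem_nhds _ hε₀pos)
    rw [nhds_pi] at hB₀
    obtain ⟨F₀, t₀, ht₀, hsub₀⟩ := Filter.mem_pi'.1 hB₀
    have himinf : (Subtype.val '' (φ ⁻¹' {(m₀, d₀)})).Infinite :=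
      hinf.image (Subtype.val_injective.injOn)
    obtain ⟨i, hiim, hiF⟩ := himinf.exists_notMem_finset F₀
    obtain ⟨s, hsfib, rfl⟩ := hiim
    have hm₀ : md s.1 s.2 = m₀ := congrArg Prod.fst (Set.mem_singleton_iff.1 hsfib)
    have hd₀ : dd s.1 s.2 = d₀.1 := by
      have := congrArg Prod.snd (Set.mem_singleton_iff.1 hsfib)
      exact congrArg Subtype.val this
    obtain ⟨a, b, hab⟩ := haux s.1 s.2
    rw [hm₀, hd₀] at hab
    have hmem : ∀ z : ℝ, Function.update d₀.1 s.1 z ∈ g ⁻¹' Metric.ball (g d₀.1) ε₀ := by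
      intro z
      apply hsub₀
      intro j hj
      have hji : j ≠ s.1 := by rintro rfl; exact hiF hj
      rw [Function.update_of_ne hji]
      exact mem_of_mem_nhds (ht₀ j)
    have hua := hmem a
    have hub := hmem b
    rw [Set.mem_preimage, Metric.mem_ball, Real.dist_eq] at hua hub
    have tri : |g (Function.update d₀.1 s.1 a) - g (Function.update d₀.1 s.1 b)| ≤
        |g (Function.update d₀.1 s.1 a) - g d₀.1| + |g d₀.1 - g (Function.update d₀.1 s.1 b)| :=
      abs_sub_le _ _ _
    have comm2 : |g d₀.1 - g (Function.update d₀.1 s.1 b)| =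
        |g (Function.update d₀.1 s.1 b) - g d₀.1| := abs_sub_comm _ _
    have key : 1 / (2*((m₀:ℝ)+1)) = 2 * ε₀ := by
      rw [hε₀]; field_simp; ring
    linarith
  · -- g depends only on S
    intro x y hxy
    by_contra hne
    have hεpos : 0 < |g x - g y| := abs_pos.2 (sub_ne_zero.2 hne)
    have hB : g ⁻¹' Metric.ball (g x) |g x - g y| ∈ 𝓝 x :=
      hg.tendsto x (Metric.ball_mem_nhds _ hεpos)
    rw [nhds_pi] at hB
    obtain ⟨F, t, ht, hsub⟩ := Filter.mem_pi'.1 hB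
    have patch : ∀ G : Finset ι, (∀ j ∈ G, j ∉ S) →
        g (fun j => if j ∈ G then x j else y j) = g y := by
      intro G
      induction G using Finset.induction_on with
      | empty => intro _; simp
      | insert _ _ haG ih =>
        rename_i a G
        intro hG
        have h1 : g (fun j => if j ∈ insert a G then x j else y j) =
            g (fun j => if j ∈ G then x j else y j) := by
          apply hnotS a (hG a (Finset.mem_insert_self a G))
          intro j hja
          simp only [Finset.mem_insert]
          rcases eq_or_ne j a with rfl | h
          · exact absurd rfl hja
          · simp [h]
        rw [h1]
        exact ih (fun j hj => hG j (Finset.mem_insert_of_mem hj))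
    set G : Finset ι := F.filter (fun j => j ∉ S) with hG
    have hz : (fun j => if j ∈ G then x j else y j) ∈ Set.pi ↑F t := by
      intro j hj
      by_cases hjS : j ∈ S
      · have : j ∉ G := by simp [hG, hjS]
        simp only [this, if_neg, if_false]
        rw [← hxy j hjS]
        exact mem_of_mem_nhds (ht j)
      · have : j ∈ G := by
          rw [hG, Finset.mem_filter]
          exact ⟨hj, hjS⟩
        simp only [this, if_pos, if_true]
        exact mem_of_mem_nhds (ht j)
    have := hsub hz
    rw [Set.mem_preimage, Metric.mem_ball, Real.dist_eq] at this
    rw [patch G (fun j hj => (Finset.mem_filter.1 hj).2)] at this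
    rw [abs_sub_comm] at this
    exact absurd this (lt_irrefl _)




/-- The "chain" coordinate function concentrated at `z`. -/
def eFun (z : ℝ) : ℚ → ℝ := fun q => if (q : ℝ) = z then 0 else |(q : ℝ) - z|⁻¹

/-- The coordinate function recording absolute value. -/
def eInf : ℚ → ℝ := fun q => |(q : ℝ)|

/-- The family of coordinate functions. -/
def Fam : Set (ℚ → ℝ) := {f | ∃ M, ∀ q, |f q| ≤ M} ∪ Set.range eFun ∪ {eInf}

lemma bounded_mem_Fam {f : ℚ → ℝ} (h : ∃ M, ∀ q, |f q| ≤ M) : f ∈ Fam :=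
  Or.inl (Or.inl h)

lemma eFun_mem_Fam (z : ℝ) : eFun z ∈ Fam := Or.inl (Or.inr ⟨z, rfl⟩)

lemma eInf_mem_Fam : eInf ∈ Fam := Or.inr rfl

lemma eFun_aux {z z' : ℝ} (h : z < z') : eFun z ≠ eFun z' := by
  obtain ⟨q, hq1, hq2⟩ := exists_rat_btwn (show z < (z + z')/2 by linarith)
  intro he
  have h1 : eFun z q = ((q:ℝ) - z)⁻¹ := by
    rw [eFun, if_neg (by linarith : ¬ (q:ℝ) = z), abs_of_pos (by linarith)]
  have h2 : eFun z' q = (z' - (q:ℝ))⁻¹ := by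
    rw [eFun, if_neg (by intro hh; rw [hh] at hq2; linarith), abs_of_neg (by linarith),
      neg_sub]
  have hlt : (z' - (q:ℝ))⁻¹ < ((q:ℝ) - z)⁻¹ := by
    apply inv_strictAnti₀ (by linarith) (by linarith)
  rw [he, h2] at h1
  linarith
lemma eFun_injective : Function.Injective eFun := by
  intro z z' h
  rcases lt_trichotomy z z' with h1 | h1 | h1
  · exact absurd h (eFun_aux h1)
  · exact h1
  · exact absurd h.symm (eFun_aux h1)

lemma Fam_card : Cardinal.mk ↥Fam ≤ Cardinal.continuum := by
  have h1 : Cardinal.mk ↥({f : ℚ → ℝ | ∃ M, ∀ q, |f q| ≤ M} ∪ Set.range eFun)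
      ≤ Cardinal.mk ↥{f : ℚ → ℝ | ∃ M, ∀ q, |f q| ≤ M} + Cardinal.mk ↥(Set.range eFun) :=
    Cardinal.mk_union_le _ _
  have h2 : Cardinal.mk ↥{f : ℚ → ℝ | ∃ M, ∀ q, |f q| ≤ M} ≤ Cardinal.continuum := by
    refine le_trans (Cardinal.mk_set_le _) ?_
    rw [Cardinal.mk_arrow]
    rw [Cardinal.mk_real, Cardinal.mkRat, Cardinal.lift_uzero, Cardinal.lift_uzero,
      Cardinal.continuum_power_aleph0]
  have h3 : Cardinal.mk ↥(Set.range eFun) ≤ Cardinal.continuum := by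
    refine le_trans (Cardinal.mk_range_le) ?_
    rw [Cardinal.mk_real]
  have h4 : Cardinal.mk ↥Fam ≤ Cardinal.mk
      ↥({f : ℚ → ℝ | ∃ M, ∀ q, |f q| ≤ M} ∪ Set.range eFun) + Cardinal.mk ↥({eInf} : Set (ℚ → ℝ)) :=
    Cardinal.mk_union_le _ _
  have h5 : Cardinal.mk ↥({eInf} : Set (ℚ → ℝ)) ≤ Cardinal.continuum := by
    rw [Cardinal.mk_singleton]
    exact le_trans (le_of_lt Cardinal.one_lt_aleph0) Cardinal.aleph0_le_continuum
  calc Cardinal.mk ↥Fam ≤ _ + _ := h4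
    _ ≤ Cardinal.continuum := Cardinal.add_le_of_le Cardinal.aleph0_le_continuum
        (le_trans h1 (Cardinal.add_le_of_le Cardinal.aleph0_le_continuum h2 h3)) h5

lemma exists_sigma {ι : Type*} (hι : Cardinal.mk ι = Cardinal.continuum) :
    ∃ σ : ι → (ℚ → ℝ), Set.range σ = Fam := by
  classical
  have h1 : Nonempty (↥Fam ↪ ι) := by
    rw [← Cardinal.lift_mk_le']
    calc Cardinal.lift.{_} (Cardinal.mk ↥Fam) ≤ Cardinal.lift Cardinal.continuum :=
        Cardinal.lift_le.2 Fam_card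
      _ = Cardinal.continuum := Cardinal.lift_continuum
      _ = Cardinal.lift (Cardinal.mk ι) := by rw [Cardinal.lift_uzero, hι]
  obtain ⟨e⟩ := h1
  refine ⟨fun i => if h : ∃ a : ↥Fam, e a = i then h.choose.1 else eInf, ?_⟩
  ext f
  constructor
  · rintro ⟨i, rfl⟩
    by_cases h : ∃ a : ↥Fam, e a = i
    · simp only [dif_pos h]; exact h.choose.2
    · simp only [dif_neg h]; exact eInf_mem_Fam
  · intro hf
    refine ⟨e ⟨f, hf⟩, ?_⟩
    have h : ∃ a : ↥Fam, e a = e ⟨f, hf⟩ := ⟨⟨f, hf⟩, rfl⟩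
    simp only [dif_pos h]
    have : h.choose = ⟨f, hf⟩ := e.injective h.choose_spec
    rw [this]






/-- The points of the copy of `ℕ` (indexed by `ℚ`). -/
def xpt (σ : ι → ℚ → ℝ) : ℚ → ι → ℝ := fun q i => σ i q

lemma exists_delta (σ : ι → ℚ → ℝ) (hσ : Set.range σ = Fam) (q : ℚ) :
    ∃ i, σ i = fun q' => if q' = q then (1:ℝ) else 0 := by
  have h : (fun q' => if q' = q then (1:ℝ) else 0) ∈ Fam := by
    apply bounded_mem_Fam
    refine ⟨1, fun q' => ?_⟩
    split <;> simp
  rw [← hσ] at h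
  exact h

lemma xpt_inj (σ : ι → ℚ → ℝ) (hσ : Set.range σ = Fam) : Function.Injective (xpt σ) := by
  intro q q' h
  obtain ⟨i, hi⟩ := exists_delta σ hσ q'
  have h3 : σ i q = σ i q' := congrFun h i
  rw [hi] at h3
  beta_reduce at h3
  by_contra hne
  rw [if_neg hne, if_pos rfl] at h3
  norm_num at h3

lemma xpt_discrete (σ : ι → ℚ → ℝ) (hσ : Set.range σ = Fam) :
    DiscreteTopology ↥(Set.range (xpt σ)) := by
  refine discreteTopology_iff_isOpen_singleton.mpr ?_
  rintro ⟨p, hp⟩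
  obtain ⟨q, rfl⟩ := hp
  obtain ⟨i, hi⟩ := exists_delta σ hσ q
  have hopen : IsOpen (Subtype.val ⁻¹' {y : ι → ℝ | (1/2 : ℝ) < y i} :
      Set ↥(Set.range (xpt σ))) :=
    ((isOpen_lt continuous_const (continuous_apply i))).preimage continuous_subtype_val
  convert hopen using 1
  ext ⟨p', hp'⟩
  obtain ⟨q', rfl⟩ := hp'
  simp only [Set.mem_singleton_iff, Set.mem_preimage, Set.mem_setOf_eq, Subtype.ext_iff]
  constructor
  · intro h
    have hqq : q' = q := xpt_inj σ hσ h
    subst hqq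
    show (1/2 : ℝ) < σ i q'
    rw [hi]
    beta_reduce
    rw [if_pos rfl]
    norm_num
  · intro h
    have h2 : (1/2 : ℝ) < σ i q' := h
    rw [hi] at h2
    beta_reduce at h2
    by_cases hq : q' = q
    · rw [hq]
    · rw [if_neg hq] at h2; norm_num at h2

lemma finite_not_mem_of_no_singleton (V : Ultrafilter ℚ) (hnp : ∀ q : ℚ, {q} ∉ V)
    {s : Set ℚ} (hs : s.Finite) : s ∉ V := by
  refine Set.Finite.induction_on s hs (Filter.empty_notMem _) ?_
  intro a t _ _ ih
  rw [Set.insert_eq, Ultrafilter.union_mem_iff]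
  rintro (h | h)
  · exact hnp a h
  · exact ih h

lemma xpt_closed (σ : ι → ℚ → ℝ) (hσ : Set.range σ = Fam) :
    IsClosed (Set.range (xpt σ)) := by
  apply isClosed_of_closure_subset
  intro p hp
  obtain ⟨U, hNU, hUp⟩ := mem_closure_iff_ultrafilter.1 hp
  set V : Ultrafilter ℚ := U.comap (xpt_inj σ hσ) hNU with hV
  have htend : Filter.Tendsto (xpt σ) ↑V (𝓝 p) := by
    show Filter.map (xpt σ) ↑V ≤ 𝓝 p
    rw [hV, Ultrafilter.coe_comap, Filter.map_comap_of_mem hNU]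
    exact hUp
  have hcoord : ∀ i, Filter.Tendsto (σ i) ↑V (𝓝 (p i)) := by
    intro i
    have := tendsto_pi_nhds.1 htend i
    exact this
  by_cases hsing : ∃ q : ℚ, {q} ∈ V
  · -- principal case: p = xpt σ q
    obtain ⟨q, hq⟩ := hsing
    have : p = xpt σ q := by
      have hcl : p ∈ closure {xpt σ q} := by
        rw [mem_closure_iff_nhds]
        intro t ht
        have h1 : xpt σ ⁻¹' t ∈ V := htend ht
        obtain ⟨q', hq'⟩ := Filter.nonempty_of_mem (Filter.inter_mem h1 hq)
        rcases hq' with ⟨hq't, hq'q⟩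
        rw [Set.mem_singleton_iff] at hq'q
        subst hq'q
        exact ⟨xpt σ q', hq't, rfl⟩
      rwa [closure_singleton, Set.mem_singleton_iff] at hcl
    rw [this]
    exact Set.mem_range_self q
  · push_neg at hsing
    exfalso
    -- the |q| coordinate is bounded along V
    obtain ⟨iInf', hiInf⟩ : ∃ i, σ i = eInf := by
      have := eInf_mem_Fam; rw [← hσ] at this; exact this
    have htInf : Filter.Tendsto eInf ↑V (𝓝 (p iInf')) := by
      rw [← hiInf]; exact hcoord iInf'
    set K : ℝ := |p iInf'| + 1 with hK
    have hBq : {q : ℚ | |(q:ℝ)| ≤ K} ∈ V := by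
      have h1 := htInf (Metric.ball_mem_nhds (p iInf') one_pos)
      refine Filter.mem_of_superset h1 ?_
      intro q hq
      simp only [Set.mem_preimage, Metric.mem_ball, Real.dist_eq] at hq
      have : |eInf q| - |p iInf'| ≤ |eInf q - p iInf'| := abs_sub_abs_le_abs_sub _ _
      have h2 : |eInf q| ≤ |p iInf'| + 1 := by
        have := abs_abs (eInf q)
        linarith [abs_sub_abs_le_abs_sub (eInf q) (p iInf'), le_abs_self (eInf q - p iInf')]
      simp only [Set.mem_setOf_eq]
      calc |(q:ℝ)| = eInf q := rfl
        _ ≤ |eInf q| := le_abs_self _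
        _ ≤ K := by rw [hK]; exact h2
    -- push forward to ℝ and use compactness
    set W : Ultrafilter ℝ := V.map (fun q : ℚ => (q:ℝ)) with hW
    have hIcc : Set.Icc (-K) K ∈ W := by
      rw [hW]
      apply Filter.mem_of_superset hBq  -- membership in map = preimage in V
      intro q hq
      simp only [Set.mem_setOf_eq] at hq
      simp only [Set.mem_preimage, Set.mem_Icc]
      constructor
      · linarith [neg_abs_le (q:ℝ)]
      · linarith [le_abs_self (q:ℝ)]
    obtain ⟨z, hzIcc, hWz⟩ := isCompact_Icc.ultrafilter_le_nhds W (Filter.le_principal_iff.2 hIcc)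
    obtain ⟨iz, hiz⟩ : ∃ i, σ i = eFun z := by
      have := eFun_mem_Fam z; rw [← hσ] at this; exact this
    have htz : Filter.Tendsto (eFun z) ↑V (𝓝 (p iz)) := by
      rw [← hiz]; exact hcoord iz
    set M : ℝ := |p iz| + 1 with hM
    have hMpos : 0 < M := by positivity
    have hB1 : {q : ℚ | eFun z q ≤ M} ∈ V := by
      have h1 := htz (Metric.ball_mem_nhds (p iz) one_pos)
      refine Filter.mem_of_superset h1 ?_
      intro q hq
      simp only [Set.mem_preimage, Metric.mem_ball, Real.dist_eq] at hq
      simp only [Set.mem_setOf_eq]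
      have h2 := le_abs_self (eFun z q - p iz)
      have h3 := le_abs_self (p iz)
      have h4 := abs_sub_lt_iff.1 hq
      rw [hM]
      linarith [h4.1]
    have hB2 : {q : ℚ | |(q:ℝ) - z| < (M+1)⁻¹} ∈ V := by
      have h1 : Metric.ball z (M+1)⁻¹ ∈ 𝓝 z := Metric.ball_mem_nhds z (by positivity)
      have h2 := hWz h1
      rw [hW] at h2
      refine Filter.mem_of_superset h2 ?_
      intro q hq
      simp only [Set.mem_preimage, Metric.mem_ball, Real.dist_eq] at hq
      exact hq
    have hB3 : {q : ℚ | (q:ℝ) ≠ z} ∈ V := by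
      rw [show {q : ℚ | (q:ℝ) ≠ z} = {q : ℚ | (q:ℝ) = z}ᶜ from rfl]
      rw [Ultrafilter.compl_mem_iff_notMem]
      apply finite_not_mem_of_no_singleton V hsing
      apply Set.Subsingleton.finite
      intro q1 h1 q2 h2
      have : (q1 : ℝ) = (q2 : ℝ) := by
        rw [Set.mem_setOf_eq] at h1 h2; rw [h1, h2]
      exact_mod_cast this
    obtain ⟨q, hq⟩ := Filter.nonempty_of_mem (Filter.inter_mem (Filter.inter_mem hB1 hB2) hB3)
    obtain ⟨⟨hq1, hq2⟩, hq3⟩ := hq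
    simp only [Set.mem_setOf_eq] at hq1 hq2 hq3
    have he : eFun z q = |(q:ℝ) - z|⁻¹ := by rw [eFun, if_neg hq3]
    have habs : 0 < |(q:ℝ) - z| := abs_pos.2 (sub_ne_zero.2 hq3)
    have : M + 1 < |(q:ℝ) - z|⁻¹ := by
      rw [← inv_inv (M+1)]
      exact inv_strictAnti₀ (by positivity) hq2
    rw [he] at hq1
    linarith

lemma xpt_cstar (σ : ι → ℚ → ℝ) (hσ : Set.range σ = Fam) (f : C(↥(Set.range (xpt σ)), ℝ))
    (hf : ∃ M : ℝ, ∀ a, |f a| ≤ M) :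
    ∃ g : C(ι → ℝ, ℝ), ∀ a : ↥(Set.range (xpt σ)), g ↑a = f a := by
  obtain ⟨M, hM⟩ := hf
  set φ : ℚ → ℝ := fun q => f ⟨xpt σ q, Set.mem_range_self q⟩ with hφ
  obtain ⟨i, hi⟩ : ∃ i, σ i = φ := by
    have : φ ∈ Fam := bounded_mem_Fam ⟨M, fun q => hM _⟩
    rw [← hσ] at this; exact this
  refine ⟨⟨fun y => y i, continuous_apply i⟩, ?_⟩
  rintro ⟨p, hp⟩
  obtain ⟨q, rfl⟩ := hp
  show (xpt σ q) i = _
  have : (xpt σ q) i = φ q := by rw [xpt, hi]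
  rw [this]


lemma infinite_rat_btwn {a b : ℝ} (h : a < b) :
    {q : ℚ | a < (q:ℝ) ∧ (q:ℝ) < b}.Infinite := by
  by_contra hfin
  rw [Set.not_infinite] at hfin
  obtain ⟨q0, hq0a, hq0b⟩ := exists_rat_btwn h
  have hne : hfin.toFinset.Nonempty := ⟨q0, hfin.mem_toFinset.2 ⟨hq0a, hq0b⟩⟩
  set m := hfin.toFinset.min' hne with hmdef
  have hm : m ∈ hfin.toFinset := Finset.min'_mem _ _
  rw [hfin.mem_toFinset] at hm
  obtain ⟨q1, hq1a, hq1b⟩ := exists_rat_btwn hm.1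
  have hq1S : q1 ∈ hfin.toFinset := hfin.mem_toFinset.2 ⟨hq1a, lt_trans hq1b hm.2⟩
  have h1 : m ≤ q1 := Finset.min'_le _ _ hq1S
  have h2 : (m:ℝ) ≤ (q1:ℝ) := by exact_mod_cast h1
  linarith

lemma xpt_notC (σ : ι → ℚ → ℝ) (hσ : Set.range σ = Fam) (c : ι → ℝ)
    (hc : Function.Injective c) :
    ¬ ∀ f : C(↥(Set.range (xpt σ)), ℝ), ∃ g : C(ι → ℝ, ℝ),
      ∀ a : ↥(Set.range (xpt σ)), g ↑a = f a := by
  classical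
  haveI := xpt_discrete σ hσ
  set N := Set.range (xpt σ) with hN
  set enum : ℚ ≃ ℕ := Denumerable.eqv ℚ with henum
  set f : C(↥N, ℝ) :=
    ⟨fun a => ((enum (Set.mem_range.mp a.2).choose : ℕ) : ℝ),
      continuous_of_discreteTopology⟩ with hf
  have hfval : ∀ q : ℚ, f ⟨xpt σ q, Set.mem_range_self q⟩ = ((enum q : ℕ) : ℝ) := by
    intro q
    have h1 : xpt σ (Set.mem_range.mp (Set.mem_range_self (f := xpt σ) q)).choose = xpt σ q :=
      (Set.mem_range.mp (Set.mem_range_self q)).choose_spec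
    have h2 := xpt_inj σ hσ h1
    simp only [hf, ContinuousMap.coe_mk]
    rw [h2]
  intro h
  obtain ⟨g, hg⟩ := h f
  have hval : ∀ q : ℚ, g (xpt σ q) = ((enum q : ℕ) : ℝ) := by
    intro q
    have := hg ⟨xpt σ q, Set.mem_range_self q⟩
    rw [this, hfval]
  obtain ⟨S, hScnt, hdep⟩ := exists_countable_dep c hc g g.continuous
  -- the countable set of "chain" points used by S
  set Z : Set ℝ := ⋃ i ∈ S, {z : ℝ | σ i = eFun z} with hZ
  have hZcnt : Z.Countable := by
    refine hScnt.biUnion (fun i hi => ?_)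
    apply Set.Subsingleton.countable
    intro z1 h1 z2 h2
    exact eFun_injective (h1.symm.trans h2)
  -- pick y outside Z and outside the rationals
  obtain ⟨y, hy⟩ : ∃ y : ℝ, y ∉ Z ∪ Set.range (fun q : ℚ => (q:ℝ)) := by
    by_contra hcon
    push_neg at hcon
    have huniv : (Z ∪ Set.range (fun q : ℚ => (q:ℝ))) = Set.univ :=
      Set.eq_univ_of_forall hcon
    have hcnt : (Z ∪ Set.range (fun q : ℚ => (q:ℝ))).Countable :=
      hZcnt.union (Set.countable_range _)
    rw [huniv, Set.countable_univ_iff] at hcnt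
    exact not_countable hcnt
  have hynotq : ∀ q : ℚ, (q:ℝ) ≠ y := by
    intro q hq
    exact hy (Or.inr ⟨q, hq⟩)
  have hynotZ : y ∉ Z := fun hz => hy (Or.inl hz)
  -- the filter of punctured neighborhoods of y, traced on ℚ
  set A : ℕ → Set ℚ := fun k => {q : ℚ | |(q:ℝ) - y| < ((k:ℝ)+1)⁻¹} with hA
  have hAinf : ∀ k, (A k).Infinite := by
    intro k
    have h1 : y < y + ((k:ℝ)+1)⁻¹ := by
      have : (0:ℝ) < ((k:ℝ)+1)⁻¹ := by positivity
      linarith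
    refine (infinite_rat_btwn h1).mono ?_
    rintro q ⟨hq1, hq2⟩
    simp only [hA, Set.mem_setOf_eq]
    rw [abs_sub_lt_iff]
    constructor <;> linarith
  have hAanti : ∀ k k' : ℕ, k ≤ k' → A k' ⊆ A k := by
    intro k k' hkk q hq
    simp only [hA, Set.mem_setOf_eq] at hq ⊢
    have h1 : ((k':ℝ)+1)⁻¹ ≤ ((k:ℝ)+1)⁻¹ := by
      apply inv_anti₀ (by positivity)
      exact_mod_cast Nat.add_le_add_right hkk 1
    linarith
  have hGneBot : Filter.NeBot (⨅ k, 𝓟 (A k)) := by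
    apply Filter.iInf_neBot_of_directed
    · intro k k'
      refine ⟨max k k', ?_, ?_⟩
      · exact Filter.principal_mono.2 (hAanti _ _ (le_max_left _ _))
      · exact Filter.principal_mono.2 (hAanti _ _ (le_max_right _ _))
    · intro k
      exact Filter.principal_neBot_iff.2 (hAinf k).nonempty
  set V : Ultrafilter ℚ := @Ultrafilter.of _ (⨅ k, 𝓟 (A k)) hGneBot with hV
  have hVle : ↑V ≤ ⨅ k, 𝓟 (A k) := Ultrafilter.of_le _
  have hVA : ∀ k, A k ∈ V := by
    intro k
    have h1 : (⨅ k, 𝓟 (A k)) ≤ 𝓟 (A k) := iInf_le _ k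
    exact hVle (Filter.le_principal_iff.1 h1)
  -- finite sets are not in V
  have hVfin : ∀ s : Set ℚ, s.Finite → s ∉ V := by
    intro s hs hsV
    have hk : ∀ q : ℚ, ∃ k : ℕ, ((k:ℝ)+1)⁻¹ < |(q:ℝ) - y| := by
      intro q
      have hpos : 0 < |(q:ℝ) - y| := abs_pos.2 (sub_ne_zero.2 (hynotq q))
      obtain ⟨k, hk⟩ := exists_nat_one_div_lt hpos
      exact ⟨k, by rwa [one_div] at hk⟩
    choose kk hkk using hk
    set K := hs.toFinset.sup kk with hK
    have hdisj : s ∩ A K = ∅ := by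
      ext q
      simp only [Set.mem_inter_iff, Set.mem_empty_iff_false, iff_false, not_and]
      intro hqs hqA
      simp only [hA, Set.mem_setOf_eq] at hqA
      have h1 : kk q ≤ K := Finset.le_sup (hs.mem_toFinset.2 hqs)
      have h2 : ((K:ℝ)+1)⁻¹ ≤ ((kk q:ℝ)+1)⁻¹ := by
        apply inv_anti₀ (by positivity)
        exact_mod_cast Nat.add_le_add_right h1 1
      linarith [hkk q]
    have := Filter.nonempty_of_mem (Filter.inter_mem hsV (hVA K))
    rw [hdisj] at this
    exact Set.not_nonempty_empty this
  -- every coordinate in S has a limit along V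
  have hlim : ∀ i, i ∈ S → ∃ L : ℝ, Filter.Tendsto (σ i) ↑V (𝓝 L) := by
    intro i hi
    have hmem : σ i ∈ Fam := by rw [← hσ]; exact Set.mem_range_self i
    have hbd : ∃ B ∈ V, ∃ M : ℝ, ∀ q ∈ B, |σ i q| ≤ M := by
      rcases hmem with (hb | ⟨z, hz⟩) | he
      · obtain ⟨M, hM⟩ := hb
        exact ⟨Set.univ, Filter.univ_mem, M, fun q _ => hM q⟩
      · -- σ i = eFun z with z ≠ y
        have hzy : z ≠ y := by
          intro hzy
          apply hynotZ
          rw [hZ]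
          refine Set.mem_biUnion hi ?_
          rw [Set.mem_setOf_eq, ← hz, hzy]
        have hdist : 0 < |z - y| := abs_pos.2 (sub_ne_zero.2 hzy)
        obtain ⟨k, hk⟩ := exists_nat_one_div_lt (half_pos hdist)
        rw [one_div] at hk
        refine ⟨A k, hVA k, 2 / |z - y|, ?_⟩
        intro q hq
        simp only [hA, Set.mem_setOf_eq] at hq
        rw [← hz, eFun]
        split_ifs with hqz
        · simp only [abs_zero]
          positivity
        · have h1 : |z - y| ≤ |z - (q:ℝ)| + |(q:ℝ) - y| := abs_sub_le _ _ _
          have h2 : |(q:ℝ) - z| = |z - (q:ℝ)| := abs_sub_comm _ _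
          have h3 : |z - y|/2 ≤ |(q:ℝ) - z| := by
            rw [h2]; linarith
          have h4 : 0 < |(q:ℝ) - z| := abs_pos.2 (sub_ne_zero.2 hqz)
          rw [abs_of_nonneg (inv_nonneg.2 (abs_nonneg _))]
          rw [div_eq_mul_inv]
          calc |(q:ℝ) - z|⁻¹ ≤ (|z - y|/2)⁻¹ := by
                apply inv_anti₀ (by linarith) h3
            _ = 2 * |z - y|⁻¹ := by rw [div_eq_mul_inv, mul_inv, inv_inv, mul_comm]
      · -- σ i = eInf
        rw [Set.mem_singleton_iff] at he
        refine ⟨A 0, hVA 0, |y| + 1, ?_⟩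
        intro q hq
        simp only [hA, Set.mem_setOf_eq, Nat.cast_zero, zero_add, inv_one] at hq
        rw [he, eInf, abs_abs]
        calc |(q:ℝ)| ≤ |y| + |(q:ℝ) - y| := by
              have := abs_sub_le (q:ℝ) y 0
              simp only [sub_zero] at this
              linarith [abs_sub_comm (q:ℝ) y]
          _ ≤ |y| + 1 := by linarith
    obtain ⟨B, hBV, M, hM⟩ := hbd
    set W : Ultrafilter ℝ := V.map (σ i) with hW
    have hIcc : Set.Icc (-M) M ∈ W := by
      rw [hW]
      apply Filter.mem_of_superset hBV
      intro q hq
      have := abs_le.1 (hM q hq)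
      exact ⟨this.1, this.2⟩
    obtain ⟨L, _, hWL⟩ := isCompact_Icc.ultrafilter_le_nhds W (Filter.le_principal_iff.2 hIcc)
    refine ⟨L, ?_⟩
    show Filter.map (σ i) ↑V ≤ 𝓝 L
    rw [← Ultrafilter.coe_map]
    exact hWL
  -- the modified points and their limit
  set w : ι → ℝ := fun i => if h : i ∈ S then (hlim i h).choose else 0 with hw
  set x' : ℚ → ι → ℝ := fun q i => if i ∈ S then σ i q else 0 with hx'
  have htend : Filter.Tendsto x' ↑V (𝓝 w) := by
    rw [tendsto_pi_nhds]
    intro i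
    by_cases hi : i ∈ S
    · have h1 : (fun q => x' q i) = σ i := by
        funext q; simp only [hx', if_pos hi]
      rw [h1, hw]
      simp only [dif_pos hi]
      exact (hlim i hi).choose_spec
    · have h1 : (fun q => x' q i) = fun _ => (0:ℝ) := by
        funext q; simp only [hx', if_neg hi]
      rw [h1, hw]
      simp only [dif_neg hi]
      exact tendsto_const_nhds
  have heq : ∀ q, g (x' q) = ((enum q : ℕ) : ℝ) := by
    intro q
    have h1 : g (x' q) = g (xpt σ q) := by
      apply hdep
      intro i hi
      simp only [hx', if_pos hi]
      rfl
    rw [h1, hval]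
  have htg : Filter.Tendsto (fun q => ((enum q : ℕ) : ℝ)) ↑V (𝓝 (g w)) := by
    have h1 : Filter.Tendsto (fun q => g (x' q)) ↑V (𝓝 (g w)) :=
      (g.continuous.tendsto w).comp htend
    have h2 : (fun q => g (x' q)) = fun q => ((enum q : ℕ) : ℝ) := funext heq
    rwa [h2] at h1
  -- contradiction with the unboundedness of enum along V
  have hE : {q : ℚ | ((enum q : ℕ) : ℝ) ∈ Metric.ball (g w) 1} ∈ V :=
    htg (Metric.ball_mem_nhds _ one_pos)
  have hEfin : {q : ℚ | ((enum q : ℕ) : ℝ) ∈ Metric.ball (g w) 1}.Finite := by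
    have hsub : {q : ℚ | ((enum q : ℕ) : ℝ) ∈ Metric.ball (g w) 1} ⊆
        (fun q : ℚ => (enum q : ℕ)) ⁻¹' (Set.Iio (Nat.ceil (g w + 1) + 1)) := by
      intro q hq
      simp only [Set.mem_setOf_eq, Metric.mem_ball, Real.dist_eq] at hq
      simp only [Set.mem_preimage, Set.mem_Iio]
      have h1 : ((enum q : ℕ) : ℝ) < g w + 1 := by
        have := abs_sub_lt_iff.1 hq
        linarith [this.1]
      have h2 : ((enum q : ℕ) : ℝ) ≤ (Nat.ceil (g w + 1) : ℝ) :=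
        le_trans h1.le (Nat.le_ceil _)
      have h3 : (enum q : ℕ) ≤ Nat.ceil (g w + 1) := by exact_mod_cast h2
      omega
    refine Set.Finite.subset (Set.Finite.preimage ?_ (Set.finite_Iio _)) hsub
    exact Function.Injective.injOn (fun a b hab => enum.injective hab)
  exact hVfin _ hEfin hE


end

end Statement18Proof

open Statement18Proof in
/-- If `ι` has cardinality `𝔠 = 2^{ℵ₀}`, then `ℝ^ι` contains a closed copy
`N` of `ℕ` that is C*-embedded but not C-embedded in `ℝ^ι`. -/
theorem statement18 (ι : Type*) (hι : Cardinal.mk ι = Cardinal.continuum) :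
    ∃ N : Set (ι → ℝ), ClosedCopyOfNat N ∧ CstarEmbedded N ∧ ¬ CEmbedded N := by
  obtain ⟨σ, hσ⟩ := exists_sigma hι
  obtain ⟨e⟩ : Nonempty (ℝ ≃ ι) := by
    rw [← Cardinal.lift_mk_eq']
    rw [Cardinal.mk_real, Cardinal.lift_continuum, Cardinal.lift_uzero, hι]
  refine ⟨Set.range (xpt σ), ⟨?_, ?_, ?_, ?_⟩, ?_, ?_⟩
  · exact Set.countable_range _
  · exact Set.infinite_range_of_injective (xpt_inj σ hσ)
  · exact xpt_closed σ hσ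
  · exact xpt_discrete σ hσ
  · intro f hf
    exact xpt_cstar σ hσ f hf
  · intro hC
    exact xpt_notC σ hσ e.symm e.symm.injective hC
end

section
/- There exists a realcompact Tychonoff (completely regular Hausdorff) space X containing closed copies N₁ and N₂ of ℕ such that N₁ and N₂ are each C*-embedded in X, neither of N₁, N₂ meets the closure of the other (so N₁ ∪ N₂ is itself a closed copy of ℕ in X), and N₁ ∪ N₂ is not C*-embedded in X. -/
open Set Topology

universe u

/-- A topological space is *realcompact* if it admits a closed embedding into a power
of the real line. -/
def Realcompact (X : Type u) [TopologicalSpace X] : Prop :=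
  ∃ (ι : Type u) (f : X → ι → ℝ), Topology.IsClosedEmbedding f
open Filter

noncomputable section
namespace St19

/-! ## The rationals enumeration and ultrafilters -/

def q (n : ℕ) : ℝ := ((Denumerable.eqv ℚ).symm n : ℚ)

lemma denseRange_q : DenseRange q := by
  have h : Set.range q = Set.range ((↑) : ℚ → ℝ) := by
    ext x; constructor
    · rintro ⟨n, rfl⟩; exact ⟨_, rfl⟩
    · rintro ⟨a, rfl⟩; exact ⟨Denumerable.eqv ℚ a, by simp [q]⟩
  unfold DenseRange
  rw [h]
  exact Rat.denseRange_cast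

def baseF (γ : ℝ) : Filter ℕ := Filter.comap q (𝓝[≠] γ)

instance baseF_neBot (γ : ℝ) : (baseF γ).NeBot := by
  rw [baseF, Filter.comap_neBot_iff]
  intro t ht
  have hd : Dense (Set.range q \ {γ}) := Dense.diff_singleton denseRange_q γ
  rcases mem_nhdsWithin.1 ht with ⟨V, hVopen, hγV, hVsub⟩
  rcases hd.exists_mem_open hVopen ⟨γ, hγV⟩ with ⟨x, ⟨⟨n, rfl⟩, hx2⟩, hxV⟩
  exact ⟨n, hVsub ⟨hxV, hx2⟩⟩

def U (γ : ℝ) : Ultrafilter ℕ := Ultrafilter.of (baseF γ)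

lemma U_le (γ : ℝ) : (U γ : Filter ℕ) ≤ baseF γ := Ultrafilter.of_le _

lemma mem_U_ball (γ : ℝ) {ε : ℝ} (hε : 0 < ε) : {n | |q n - γ| < ε} ∈ U γ := by
  have h1 : {n | q n ∈ Metric.ball γ ε \ {γ}} ∈ baseF γ := by
    apply Filter.preimage_mem_comap
    exact diff_mem_nhdsWithin_compl (Metric.ball_mem_nhds γ hε) _
  refine U_le γ (Filter.mem_of_superset h1 ?_)
  intro n hn
  simpa [Real.dist_eq] using hn.1

lemma mem_U_ne (γ : ℝ) : {n | q n ≠ γ} ∈ U γ := by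
  have h1 : {n | q n ∈ (Set.univ \ {γ} : Set ℝ)} ∈ baseF γ := by
    apply Filter.preimage_mem_comap
    exact diff_mem_nhdsWithin_compl Filter.univ_mem _
  refine U_le γ (Filter.mem_of_superset h1 ?_)
  intro n hn; exact hn.2

/-- the ultrafilters are free -/
lemma U_cofinite (γ : ℝ) {T : Set ℕ} (hT : T.Finite) : Tᶜ ∈ U γ := by
  rw [Ultrafilter.compl_mem_iff_notMem]
  intro hTU
  -- T ∩ {q n ≠ γ} is finite and in U γ
  set T' : Set ℕ := T ∩ {n | q n ≠ γ} with hT'def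
  have hT'U : T' ∈ U γ := Filter.inter_mem hTU (mem_U_ne γ)
  have hT'fin : T'.Finite := hT.inter_of_left _
  have hT'ne : T'.Nonempty := Ultrafilter.nonempty_of_mem hT'U
  -- minimum positive distance
  have hpos : ∀ n ∈ T', 0 < |q n - γ| := by
    intro n hn
    have : q n ≠ γ := hn.2
    simpa [abs_pos, sub_ne_zero] using this
  obtain ⟨δ, hδpos, hδle⟩ : ∃ δ > 0, ∀ n ∈ T', δ ≤ |q n - γ| := by
    obtain ⟨n₀, hn₀, hmin⟩ := Set.exists_min_image T' (fun n => |q n - γ|) hT'fin hT'ne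
    exact ⟨|q n₀ - γ|, hpos _ hn₀, hmin⟩
  have := Filter.inter_mem hT'U (mem_U_ball γ hδpos)
  rcases Ultrafilter.nonempty_of_mem this with ⟨n, hn1, hn2⟩
  exact absurd (hδle n hn1) (by push_neg; exact hn2)

/-! ## The space -/

abbrev X : Type := ℕ ⊕ ((ℕ × ℝ) ⊕ ℝ)

def H (r : ℕ) : X := Sum.inl r
def Z (r : ℕ) (γ : ℝ) : X := Sum.inr (Sum.inl (r, γ))
def W (γ : ℝ) : X := Sum.inr (Sum.inr γ)

@[simp] lemma H_ne_Z (r r' : ℕ) (γ : ℝ) : H r ≠ Z r' γ := by simp [H, Z]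
@[simp] lemma H_ne_W (r : ℕ) (γ : ℝ) : H r ≠ W γ := by simp [H, W]
@[simp] lemma Z_ne_H (r r' : ℕ) (γ : ℝ) : Z r γ ≠ H r' := by simp [H, Z]
@[simp] lemma Z_ne_W (r : ℕ) (γ δ : ℝ) : Z r γ ≠ W δ := by simp [Z, W]
@[simp] lemma W_ne_H (γ : ℝ) (r : ℕ) : W γ ≠ H r := by simp [H, W]
@[simp] lemma W_ne_Z (γ : ℝ) (r : ℕ) (δ : ℝ) : W γ ≠ Z r δ := by simp [Z, W]
@[simp] lemma H_inj : ∀ {r r' : ℕ}, H r = H r' ↔ r = r' := by simp [H]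
@[simp] lemma W_inj : ∀ {γ γ' : ℝ}, W γ = W γ' ↔ γ = γ' := by simp [W]
@[simp] lemma Z_inj : ∀ {r r' : ℕ} {γ γ' : ℝ}, Z r γ = Z r' γ' ↔ r = r' ∧ γ = γ' := by
  simp [Z, Prod.ext_iff]

/-- Good row-sets for the neighbourhood filter of `W γ`. -/
def Wgood (γ : ℝ) (S : Set ℕ) : Prop :=
  {n | 2*n ∈ S} ∈ U γ ∧ {n | 2*n+1 ∈ S} ∈ U γ

lemma Wgood.univ (γ : ℝ) : Wgood γ Set.univ :=
  ⟨Filter.univ_mem' (fun n => trivial), Filter.univ_mem' (fun n => trivial)⟩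

lemma Wgood.inter {γ : ℝ} {S S' : Set ℕ} (h : Wgood γ S) (h' : Wgood γ S') :
    Wgood γ (S ∩ S') := by
  refine ⟨?_, ?_⟩
  · exact Filter.mem_of_superset (Filter.inter_mem h.1 h'.1) (fun n hn => hn)
  · exact Filter.mem_of_superset (Filter.inter_mem h.2 h'.2) (fun n hn => hn)

lemma Wgood.mono {γ : ℝ} {S S' : Set ℕ} (h : Wgood γ S) (hss : S ⊆ S') : Wgood γ S' := by
  refine ⟨Filter.mem_of_superset h.1 ?_, Filter.mem_of_superset h.2 ?_⟩ <;>
    · intro n hn; exact hss hn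

lemma Wgood.diff_finite {γ : ℝ} {S : Set ℕ} (h : Wgood γ S) {T : Set ℕ} (hT : T.Finite) :
    Wgood γ (S \ T) := by
  refine ⟨?_, ?_⟩
  · have h1 : {n | 2*n ∈ T}ᶜ ∈ U γ := by
      apply U_cofinite
      have : {n | 2*n ∈ T} ⊆ (fun n => 2*n) ⁻¹' T := fun n hn => hn
      exact Set.Finite.subset (hT.preimage (by intro a _ b _ hab; simp only at hab; omega)) this
    refine Filter.mem_of_superset (Filter.inter_mem h.1 h1) ?_
    intro n hn; exact ⟨hn.1, hn.2⟩
  · have h1 : {n | 2*n+1 ∈ T}ᶜ ∈ U γ := by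
      apply U_cofinite
      have : {n | 2*n+1 ∈ T} ⊆ (fun n => 2*n+1) ⁻¹' T := fun n hn => hn
      exact Set.Finite.subset (hT.preimage (by intro a _ b _ hab; simp only at hab; omega)) this
    refine Filter.mem_of_superset (Filter.inter_mem h.2 h1) ?_
    intro n hn; exact ⟨hn.1, hn.2⟩

lemma Wgood.exists_even {γ : ℝ} {S : Set ℕ} (h : Wgood γ S) : ∃ n, 2*n ∈ S :=
  (Ultrafilter.nonempty_of_mem h.1).imp (fun _ hn => hn)

lemma Wgood.exists_odd {γ : ℝ} {S : Set ℕ} (h : Wgood γ S) : ∃ n, 2*n+1 ∈ S :=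
  (Ultrafilter.nonempty_of_mem h.2).imp (fun _ hn => hn)

/-! ## The topology -/

instance topX : TopologicalSpace X where
  IsOpen O := (∀ r, H r ∈ O → {γ : ℝ | Z r γ ∉ O}.Countable) ∧
              (∀ γ, W γ ∈ O → ∃ S : Set ℕ, Wgood γ S ∧ ∀ r ∈ S, Z r γ ∈ O)
  isOpen_univ := by
    constructor
    · intro r _; simp
    · intro γ _; exact ⟨Set.univ, Wgood.univ γ, by simp⟩
  isOpen_inter := by
    rintro O O' ⟨h1, h2⟩ ⟨h1', h2'⟩
    constructor
    · intro r hr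
      have : {γ : ℝ | Z r γ ∉ O ∩ O'} ⊆ {γ | Z r γ ∉ O} ∪ {γ | Z r γ ∉ O'} := by
        intro γ hγ
        by_contra hc
        simp only [Set.mem_union, Set.mem_setOf_eq] at hc
        push_neg at hc
        exact hγ ⟨hc.1, hc.2⟩
      exact Set.Countable.mono this (Set.Countable.union (h1 r hr.1) (h1' r hr.2))
    · intro γ hγ
      obtain ⟨S, hS, hSsub⟩ := h2 γ hγ.1
      obtain ⟨S', hS', hSsub'⟩ := h2' γ hγ.2
      exact ⟨S ∩ S', hS.inter hS', fun r hr => ⟨hSsub r hr.1, hSsub' r hr.2⟩⟩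
  isOpen_sUnion := by
    intro T hT
    constructor
    · intro r hr
      rcases hr with ⟨O, hO, hrO⟩
      refine Set.Countable.mono ?_ ((hT O hO).1 r hrO)
      intro γ hγ
      simp only [Set.mem_setOf_eq] at hγ ⊢
      intro hc; exact hγ ⟨O, hO, hc⟩
    · intro γ hγ
      rcases hγ with ⟨O, hO, hγO⟩
      obtain ⟨S, hS, hSsub⟩ := (hT O hO).2 γ hγO
      exact ⟨S, hS, fun r hr => ⟨O, hO, hSsub r hr⟩⟩

lemma isOpen_iff' {O : Set X} :
    IsOpen O ↔ (∀ r, H r ∈ O → {γ : ℝ | Z r γ ∉ O}.Countable) ∧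
              (∀ γ, W γ ∈ O → ∃ S : Set ℕ, Wgood γ S ∧ ∀ r ∈ S, Z r γ ∈ O) := Iff.rfl

/-! ## Basic neighborhoods -/

def Anb (r : ℕ) (s : Set ℝ) : Set X := {x | x = H r ∨ ∃ γ, γ ∉ s ∧ x = Z r γ}

def Wnb (γ : ℝ) (S : Set ℕ) : Set X := {x | x = W γ ∨ ∃ r ∈ S, x = Z r γ}

@[simp] lemma H_mem_Anb (r : ℕ) (s : Set ℝ) : H r ∈ Anb r s := Or.inl rfl
@[simp] lemma W_mem_Wnb (γ : ℝ) (S : Set ℕ) : W γ ∈ Wnb γ S := Or.inl rfl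

lemma Z_mem_Anb {r r' : ℕ} {γ : ℝ} {s : Set ℝ} : Z r' γ ∈ Anb r s ↔ (r' = r ∧ γ ∉ s) := by
  simp only [Anb, Set.mem_setOf_eq]
  constructor
  · rintro (h | ⟨δ, hδ, h⟩)
    · exact absurd h (by simp)
    · rw [Z_inj] at h; exact ⟨h.1, h.2 ▸ hδ⟩
  · rintro ⟨rfl, hγ⟩; exact Or.inr ⟨γ, hγ, rfl⟩

lemma Z_mem_Wnb {r : ℕ} {γ δ : ℝ} {S : Set ℕ} : Z r δ ∈ Wnb γ S ↔ (r ∈ S ∧ δ = γ) := by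
  simp only [Wnb, Set.mem_setOf_eq]
  constructor
  · rintro (h | ⟨r', hr', h⟩)
    · exact absurd h (by simp)
    · rw [Z_inj] at h; exact ⟨h.1 ▸ hr', h.2⟩
  · rintro ⟨hr, rfl⟩; exact Or.inr ⟨r, hr, rfl⟩

lemma isOpen_Anb (r : ℕ) {s : Set ℝ} (hs : s.Countable) : IsOpen (Anb r s) := by
  rw [isOpen_iff']
  constructor
  · intro r' hr'
    rcases hr' with h | ⟨γ, _, h⟩
    · rw [H_inj] at h
      subst h
      refine Set.Countable.mono ?_ hs
      intro γ hγ
      simp only [Set.mem_setOf_eq] at hγ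
      by_contra hc
      exact hγ (Z_mem_Anb.2 ⟨rfl, hc⟩)
    · exact absurd h (by simp)
  · intro γ hγ
    rcases hγ with h | ⟨δ, _, h⟩
    · exact absurd h (by simp)
    · exact absurd h (by simp)

lemma isOpen_Wnb (γ : ℝ) {S : Set ℕ} (_ : Wgood γ S) : IsOpen (Wnb γ S) := by
  rw [isOpen_iff']
  constructor
  · intro r hr
    rcases hr with h | ⟨r', _, h⟩
    · exact absurd h (by simp)
    · exact absurd h (by simp)
  · intro δ hδ
    rcases hδ with h | ⟨r, _, h⟩
    · rw [W_inj] at h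
      subst h
      exact ⟨S, ‹_›, fun r hr => Z_mem_Wnb.2 ⟨hr, rfl⟩⟩
    · exact absurd h (by simp)

lemma isOpen_singleton_Z (r : ℕ) (γ : ℝ) : IsOpen ({Z r γ} : Set X) := by
  rw [isOpen_iff']
  constructor
  · intro r' hr'; exact absurd hr' (by simp)
  · intro δ hδ; exact absurd hδ (by simp [eq_comm])

/-- any set consisting only of `Z`-points is open -/
lemma isOpen_of_subset_Z {O : Set X} (h : ∀ x ∈ O, ∃ r γ, x = Z r γ) : IsOpen O := by
  rw [isOpen_iff']
  constructor
  · intro r hr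
    rcases h _ hr with ⟨r', γ', hr'⟩
    exact absurd hr' (by simp)
  · intro γ hγ
    rcases h _ hγ with ⟨r', γ', hr'⟩
    exact absurd hr' (by simp)


/-! ## Neighborhoods -/

lemma mem_nhds_H {r : ℕ} {t : Set X} :
    t ∈ 𝓝 (H r) ↔ ∃ s : Set ℝ, s.Countable ∧ Anb r s ⊆ t := by
  constructor
  · intro ht
    rcases mem_nhds_iff.1 ht with ⟨O, hOt, hO, hxO⟩
    refine ⟨{γ | Z r γ ∉ O}, (isOpen_iff'.1 hO).1 r hxO, ?_⟩
    intro x hx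
    rcases hx with h | ⟨γ, hγ, h⟩
    · exact h ▸ hOt hxO
    · subst h
      simp only [Set.mem_setOf_eq, not_not] at hγ
      exact hOt hγ
  · rintro ⟨s, hs, hsub⟩
    exact Filter.mem_of_superset ((isOpen_Anb r hs).mem_nhds (H_mem_Anb r s)) hsub

lemma mem_nhds_W {γ : ℝ} {t : Set X} :
    t ∈ 𝓝 (W γ) ↔ ∃ S : Set ℕ, Wgood γ S ∧ Wnb γ S ⊆ t := by
  constructor
  · intro ht
    rcases mem_nhds_iff.1 ht with ⟨O, hOt, hO, hxO⟩
    obtain ⟨S, hS, hsub⟩ := (isOpen_iff'.1 hO).2 γ hxO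
    refine ⟨S, hS, ?_⟩
    intro x hx
    rcases hx with h | ⟨r, hr, h⟩
    · exact h ▸ hOt hxO
    · exact h ▸ hOt (hsub r hr)
  · rintro ⟨S, hS, hsub⟩
    exact Filter.mem_of_superset ((isOpen_Wnb γ hS).mem_nhds (W_mem_Wnb γ S)) hsub

lemma nhds_Z (r : ℕ) (γ : ℝ) : 𝓝 (Z r γ) = pure (Z r γ) := by
  refine le_antisymm ?_ (pure_le_nhds _)
  rw [le_pure_iff]
  exact (isOpen_singleton_Z r γ).mem_nhds rfl

/-! ## Continuity criteria -/

lemma continuousAt_Z {Y : Type*} [TopologicalSpace Y] (f : X → Y) (r : ℕ) (γ : ℝ) :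
    ContinuousAt f (Z r γ) := by
  unfold ContinuousAt
  rw [nhds_Z]
  exact (tendsto_pure_nhds f _)

lemma continuousAt_H_iff {f : X → ℝ} {r : ℕ} :
    ContinuousAt f (H r) ↔
      ∀ ε > 0, ∃ s : Set ℝ, s.Countable ∧ ∀ γ, γ ∉ s → |f (Z r γ) - f (H r)| < ε := by
  rw [ContinuousAt, Metric.tendsto_nhds]
  constructor
  · intro h ε hε
    obtain ⟨s, hs, hsub⟩ := mem_nhds_H.1 (h ε hε)
    refine ⟨s, hs, fun γ hγ => ?_⟩
    have := hsub (Or.inr ⟨γ, hγ, rfl⟩)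
    simpa [Real.dist_eq] using this
  · intro h ε hε
    obtain ⟨s, hs, hsub⟩ := h ε hε
    rw [Filter.eventually_iff]
    refine mem_nhds_H.2 ⟨s, hs, ?_⟩
    rintro x (hx | ⟨γ, hγ, hx⟩)
    · subst hx; simpa using hε
    · subst hx
      simpa [Real.dist_eq] using hsub γ hγ

lemma continuousAt_W_iff {f : X → ℝ} {γ : ℝ} :
    ContinuousAt f (W γ) ↔
      ∀ ε > 0, ∃ S : Set ℕ, Wgood γ S ∧ ∀ r ∈ S, |f (Z r γ) - f (W γ)| < ε := by
  rw [ContinuousAt, Metric.tendsto_nhds]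
  constructor
  · intro h ε hε
    obtain ⟨S, hS, hsub⟩ := mem_nhds_W.1 (h ε hε)
    refine ⟨S, hS, fun r hr => ?_⟩
    have := hsub (Or.inr ⟨r, hr, rfl⟩)
    simpa [Real.dist_eq] using this
  · intro h ε hε
    obtain ⟨S, hS, hsub⟩ := h ε hε
    rw [Filter.eventually_iff]
    refine mem_nhds_W.2 ⟨S, hS, ?_⟩
    rintro x (hx | ⟨r, hr, hx⟩)
    · subst hx; simpa using hε
    · subst hx
      simpa [Real.dist_eq] using hsub r hr

lemma continuous_iff' {f : X → ℝ} :
    Continuous f ↔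
      (∀ r, ∀ ε > 0, ∃ s : Set ℝ, s.Countable ∧ ∀ γ, γ ∉ s → |f (Z r γ) - f (H r)| < ε) ∧
      (∀ γ, ∀ ε > 0, ∃ S : Set ℕ, Wgood γ S ∧ ∀ r ∈ S, |f (Z r γ) - f (W γ)| < ε) := by
  rw [continuous_iff_continuousAt]
  constructor
  · intro h
    exact ⟨fun r => continuousAt_H_iff.1 (h (H r)), fun γ => continuousAt_W_iff.1 (h (W γ))⟩
  · rintro ⟨h1, h2⟩ x
    match x with
    | Sum.inl r => exact continuousAt_H_iff.2 (h1 r)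
    | Sum.inr (Sum.inl (r, γ)) => exact continuousAt_Z f r γ
    | Sum.inr (Sum.inr γ) => exact continuousAt_W_iff.2 (h2 γ)


/-! ## Clopen sets and indicators -/

lemma isClosed_Anb (r : ℕ) (s : Set ℝ) : IsClosed (Anb r s) := by
  rw [← isOpen_compl_iff, isOpen_iff']
  constructor
  · intro r' hr'
    by_cases h : r' = r
    · subst h
      exact absurd (H_mem_Anb r' s) hr'
    · refine Set.Countable.mono ?_ Set.countable_empty
      intro γ hγ
      simp only [Set.mem_setOf_eq, Set.mem_compl_iff, not_not] at hγ
      exact absurd ((Z_mem_Anb.1 hγ).1) h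
  · intro γ _
    refine ⟨Set.univ \ {r}, (Wgood.univ γ).diff_finite (Set.finite_singleton r), ?_⟩
    intro r' hr'
    simp only [Set.mem_compl_iff]
    intro hc
    exact hr'.2 (Z_mem_Anb.1 hc).1

lemma isClosed_Wnb (γ : ℝ) (S : Set ℕ) : IsClosed (Wnb γ S) := by
  rw [← isOpen_compl_iff, isOpen_iff']
  constructor
  · intro r _
    refine Set.Countable.mono ?_ (Set.countable_singleton γ)
    intro δ hδ
    simp only [Set.mem_setOf_eq, Set.mem_compl_iff, not_not] at hδ
    exact (Z_mem_Wnb.1 hδ).2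
  · intro δ hδ
    by_cases h : δ = γ
    · subst h
      exact absurd (W_mem_Wnb δ S) hδ
    · refine ⟨Set.univ, Wgood.univ δ, ?_⟩
      intro r _
      simp only [Set.mem_compl_iff]
      intro hc
      exact h (Z_mem_Wnb.1 hc).2

/-- countable subsets of a single row -/
def RowSub (r₀ : ℕ) (s : Set ℝ) : Set X := {x | ∃ γ ∈ s, x = Z r₀ γ}

lemma Z_mem_RowSub {r r₀ : ℕ} {γ : ℝ} {s : Set ℝ} :
    Z r γ ∈ RowSub r₀ s ↔ r = r₀ ∧ γ ∈ s := by
  simp only [RowSub, Set.mem_setOf_eq]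
  constructor
  · rintro ⟨δ, hδ, h⟩
    rw [Z_inj] at h
    exact ⟨h.1, h.2 ▸ hδ⟩
  · rintro ⟨rfl, hγ⟩
    exact ⟨γ, hγ, rfl⟩

lemma isOpen_RowSub (r₀ : ℕ) (s : Set ℝ) : IsOpen (RowSub r₀ s) :=
  isOpen_of_subset_Z (by rintro x ⟨γ, hγ, rfl⟩; exact ⟨r₀, γ, rfl⟩)

lemma isClosed_RowSub (r₀ : ℕ) {s : Set ℝ} (hs : s.Countable) : IsClosed (RowSub r₀ s) := by
  rw [← isOpen_compl_iff, isOpen_iff']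
  constructor
  · intro r _
    refine Set.Countable.mono ?_ hs
    intro γ hγ
    simp only [Set.mem_setOf_eq, Set.mem_compl_iff, not_not] at hγ
    exact (Z_mem_RowSub.1 hγ).2
  · intro γ _
    refine ⟨Set.univ \ {r₀}, (Wgood.univ γ).diff_finite (Set.finite_singleton r₀), ?_⟩
    intro r hr
    simp only [Set.mem_compl_iff]
    intro hc
    exact hr.2 (Z_mem_RowSub.1 hc).1

lemma isClosed_singleton_Z (r : ℕ) (γ : ℝ) : IsClosed ({Z r γ} : Set X) := by
  have heq : ({Z r γ} : Set X) = RowSub r {γ} := by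
    ext x
    constructor
    · rintro rfl
      exact ⟨γ, rfl, rfl⟩
    · rintro ⟨δ, hδ, rfl⟩
      have hδγ : δ = γ := hδ
      rw [hδγ]
      rfl
  rw [heq]
  exact isClosed_RowSub r (Set.countable_singleton γ)

/-- indicator function of a set -/
def chi (C : Set X) : X → ℝ := C.indicator (fun _ => 1)

@[simp] lemma chi_of_mem {C : Set X} {x : X} (h : x ∈ C) : chi C x = 1 :=
  Set.indicator_of_mem h _

@[simp] lemma chi_of_not_mem {C : Set X} {x : X} (h : x ∉ C) : chi C x = 0 :=
  Set.indicator_of_notMem h _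

lemma chi_nonneg (C : Set X) (x : X) : 0 ≤ chi C x := by
  classical
  by_cases h : x ∈ C <;> simp [h]

lemma chi_le_one (C : Set X) (x : X) : chi C x ≤ 1 := by
  classical
  by_cases h : x ∈ C <;> simp [h]

lemma continuous_chi {C : Set X} (hopen : IsOpen C) (hclosed : IsClosed C) :
    Continuous (chi C) := by
  classical
  rw [continuous_def]
  intro s _
  have hpre : chi C ⁻¹' s =
      (if (1:ℝ) ∈ s then C else ∅) ∪ (if (0:ℝ) ∈ s then Cᶜ else ∅) := by
    ext x
    by_cases hx : x ∈ C <;> by_cases ha : (1:ℝ) ∈ s <;> by_cases hb : (0:ℝ) ∈ s <;>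
      simp [hx, ha, hb, chi]
  rw [hpre]
  apply IsOpen.union <;> split
  · exact hopen
  · exact isOpen_empty
  · exact hclosed.isOpen_compl
  · exact isOpen_empty

/-! ## Ultrafilter limits -/

lemma exists_ulim (𝒰 : Ultrafilter ℕ) (v : ℕ → ℝ) (M : ℝ) (hb : ∀ n, |v n| ≤ M) :
    ∃ c, ∀ ε > 0, {n | |v n - c| < ε} ∈ 𝒰 := by
  have hcpt : IsCompact (Set.Icc (-M) M) := isCompact_Icc
  have hle : (𝒰.map v : Filter ℝ) ≤ 𝓟 (Set.Icc (-M) M) := by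
    rw [Filter.le_principal_iff, Ultrafilter.coe_map, Filter.mem_map]
    apply Filter.univ_mem'
    intro n
    simp only [Set.mem_preimage, Set.mem_Icc]
    constructor
    · linarith [abs_le.1 (hb n) |>.1]
    · exact (abs_le.1 (hb n)).2
  obtain ⟨c, _, hc⟩ := hcpt.ultrafilter_le_nhds (𝒰.map v) hle
  refine ⟨c, fun ε hε => ?_⟩
  have hball := hc (Metric.ball_mem_nhds c hε)
  rw [Ultrafilter.coe_map, Filter.mem_map] at hball
  refine Filter.mem_of_superset hball ?_
  intro n hn
  simpa [Real.dist_eq] using hn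


/-! ## The functions rho and u -/

def rho : X → ℝ := Sum.elim (fun r => 1/(r+1)) (Sum.elim (fun p => 1/(p.1+1)) (fun _ => 0))

@[simp] lemma rho_H (r : ℕ) : rho (H r) = 1/(r+1) := rfl
@[simp] lemma rho_Z (r : ℕ) (γ : ℝ) : rho (Z r γ) = 1/(r+1) := rfl
@[simp] lemma rho_W (γ : ℝ) : rho (W γ) = 0 := rfl

lemma rho_pos_aux (r : ℕ) : (0:ℝ) < 1/(r+1) := by positivity

lemma continuous_rho : Continuous rho := by
  rw [continuous_iff']
  constructor
  · intro r ε hε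
    exact ⟨∅, Set.countable_empty, fun γ _ => by simpa using hε⟩
  · intro γ ε hε
    obtain ⟨k, hk⟩ := exists_nat_one_div_lt hε
    refine ⟨{r | k < r}, ?_, ?_⟩
    · constructor
      · refine Filter.mem_of_superset (U_cofinite γ (T := {n | ¬ k < 2*n})
          (Set.Finite.subset (Set.finite_Icc 0 k) (by intro n hn; simp at hn ⊢; omega))) ?_
        intro n hn
        simpa using hn
      · refine Filter.mem_of_superset (U_cofinite γ (T := {n | ¬ k < 2*n+1})
          (Set.Finite.subset (Set.finite_Icc 0 k) (by intro n hn; simp at hn ⊢; omega))) ?_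
        intro n hn
        simpa using hn
    · intro r hr
      simp only [rho_Z, rho_W, sub_zero]
      rw [abs_of_pos (rho_pos_aux r)]
      calc 1/((r:ℝ)+1) ≤ 1/((k:ℝ)+1) := by
            apply one_div_le_one_div_of_le (by positivity)
            have : (k:ℝ) < r := by exact_mod_cast hr
            linarith
        _ < ε := hk

def u : X → ℝ := Sum.elim (fun r => q (r/2)) (Sum.elim (fun p => q (p.1/2)) id)

@[simp] lemma u_H (r : ℕ) : u (H r) = q (r/2) := rfl
@[simp] lemma u_Z (r : ℕ) (γ : ℝ) : u (Z r γ) = q (r/2) := rfl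
@[simp] lemma u_W (γ : ℝ) : u (W γ) = γ := rfl

lemma continuous_u : Continuous u := by
  rw [continuous_iff']
  constructor
  · intro r ε hε
    exact ⟨∅, Set.countable_empty, fun γ _ => by simpa using hε⟩
  · intro γ ε hε
    refine ⟨{r | |q (r/2) - γ| < ε}, ⟨?_, ?_⟩, ?_⟩
    · refine Filter.mem_of_superset (mem_U_ball γ hε) ?_
      intro n hn
      simp only [Set.mem_setOf_eq] at hn ⊢
      have h2 : (2*n)/2 = n := by omega
      rw [h2]; exact hn
    · refine Filter.mem_of_superset (mem_U_ball γ hε) ?_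
      intro n hn
      simp only [Set.mem_setOf_eq] at hn ⊢
      have h2 : (2*n+1)/2 = n := by omega
      rw [h2]; exact hn
    · intro r hr
      simpa using hr

/-! ## The copies of ℕ -/

def N1 : Set X := Set.range (fun n => H (2*n))
def N2 : Set X := Set.range (fun n => H (2*n+1))

lemma isClosed_heads (P : ℕ → Prop) : IsClosed {x : X | ∃ r, P r ∧ x = H r} := by
  rw [← isOpen_compl_iff, isOpen_iff']
  constructor
  · intro r _
    refine Set.Countable.mono ?_ Set.countable_empty
    intro γ hγ
    simp only [Set.mem_setOf_eq, Set.mem_compl_iff, not_not] at hγ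
    rcases hγ with ⟨r', _, h⟩
    exact absurd h (by simp)
  · intro γ _
    refine ⟨Set.univ, Wgood.univ γ, ?_⟩
    intro r _
    simp only [Set.mem_compl_iff, Set.mem_setOf_eq]
    rintro ⟨r', _, h⟩
    exact absurd h (by simp)

lemma N1_eq : N1 = {x : X | ∃ r, (∃ n, r = 2*n) ∧ x = H r} := by
  ext x
  constructor
  · rintro ⟨n, rfl⟩; exact ⟨2*n, ⟨n, rfl⟩, rfl⟩
  · rintro ⟨r, ⟨n, rfl⟩, rfl⟩; exact ⟨n, rfl⟩

lemma N2_eq : N2 = {x : X | ∃ r, (∃ n, r = 2*n+1) ∧ x = H r} := by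
  ext x
  constructor
  · rintro ⟨n, rfl⟩; exact ⟨2*n+1, ⟨n, rfl⟩, rfl⟩
  · rintro ⟨r, ⟨n, rfl⟩, rfl⟩; exact ⟨n, rfl⟩

lemma N1N2_eq : N1 ∪ N2 = {x : X | ∃ r, True ∧ x = H r} := by
  ext x
  constructor
  · rintro (⟨n, rfl⟩ | ⟨n, rfl⟩)
    · exact ⟨2*n, trivial, rfl⟩
    · exact ⟨2*n+1, trivial, rfl⟩
  · rintro ⟨r, _, rfl⟩
    rcases Nat.even_or_odd r with ⟨n, hn⟩ | ⟨n, hn⟩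
    · refine Or.inl ⟨n, ?_⟩
      show H (2*n) = H r
      have h2 : 2*n = r := by omega
      rw [h2]
    · refine Or.inr ⟨n, ?_⟩
      show H (2*n+1) = H r
      have h2 : 2*n+1 = r := by omega
      rw [h2]

lemma isClosed_N1 : IsClosed N1 := N1_eq ▸ isClosed_heads _
lemma isClosed_N2 : IsClosed N2 := N2_eq ▸ isClosed_heads _
lemma isClosed_N1N2 : IsClosed (N1 ∪ N2) := N1N2_eq ▸ isClosed_heads _

lemma discrete_heads {S : Set X} (hS : ∀ x ∈ S, ∃ r, x = H r) : DiscreteTopology S := by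
  rw [discreteTopology_subtype_iff]
  intro x hx
  rcases hS x hx with ⟨r, rfl⟩
  rw [Filter.inf_principal_eq_bot]
  rw [mem_nhdsWithin]
  refine ⟨Anb r ∅, isOpen_Anb r Set.countable_empty, H_mem_Anb r ∅, ?_⟩
  rintro y ⟨hy1, hy2⟩
  rcases hy1 with h | ⟨γ, _, h⟩
  · exact absurd h hy2
  · subst h
    intro hc
    rcases hS _ hc with ⟨r', hr'⟩
    exact absurd hr' (by simp)

lemma closedCopy_N1 : ClosedCopyOfNat N1 := by
  refine ⟨Set.countable_range _, ?_, isClosed_N1, ?_⟩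
  · exact Set.infinite_range_of_injective (by intro a b h; rw [H_inj] at h; omega)
  · exact discrete_heads (by rintro x ⟨n, rfl⟩; exact ⟨2*n, rfl⟩)

lemma closedCopy_N2 : ClosedCopyOfNat N2 := by
  refine ⟨Set.countable_range _, ?_, isClosed_N2, ?_⟩
  · exact Set.infinite_range_of_injective (by intro a b h; rw [H_inj] at h; omega)
  · exact discrete_heads (by rintro x ⟨n, rfl⟩; exact ⟨2*n+1, rfl⟩)

lemma closedCopy_N1N2 : ClosedCopyOfNat (N1 ∪ N2) := by
  refine ⟨(Set.countable_range _).union (Set.countable_range _), ?_, isClosed_N1N2, ?_⟩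
  · exact Set.Infinite.mono Set.subset_union_left closedCopy_N1.2.1
  · refine discrete_heads ?_
    rintro x (⟨n, rfl⟩ | ⟨n, rfl⟩)
    · exact ⟨2*n, rfl⟩
    · exact ⟨2*n+1, rfl⟩

lemma N1_inter_N2 : N1 ∩ N2 = ∅ := by
  ext x
  simp only [Set.mem_inter_iff, Set.mem_empty_iff_false, iff_false]
  rintro ⟨⟨n, hn⟩, ⟨m, hm⟩⟩
  rw [← hm] at hn
  rw [H_inj] at hn
  omega

lemma N1_inter_closure_N2 : N1 ∩ closure N2 = ∅ := by
  rw [isClosed_N2.closure_eq]; exact N1_inter_N2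

lemma N2_inter_closure_N1 : N2 ∩ closure N1 = ∅ := by
  rw [isClosed_N1.closure_eq, Set.inter_comm]
  exact N1_inter_N2


lemma exists_not_mem_countable {s : Set ℝ} (hs : s.Countable) : ∃ x : ℝ, x ∉ s := by
  by_contra h
  push_neg at h
  have h2 : (Set.univ : Set ℝ) ⊆ s := fun x _ => h x
  exact Cardinal.not_countable_real (hs.mono h2)

/-! ## C*-embeddings of N1 and N2 -/

def extFun (v : ℕ → ℝ) (tau : ℝ → ℝ) : X → ℝ :=
  Sum.elim (fun r => v (r/2)) (Sum.elim (fun p => v (p.1/2)) tau)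

@[simp] lemma extFun_H (v : ℕ → ℝ) (tau : ℝ → ℝ) (r : ℕ) : extFun v tau (H r) = v (r/2) := rfl
@[simp] lemma extFun_Z (v : ℕ → ℝ) (tau : ℝ → ℝ) (r : ℕ) (γ : ℝ) :
    extFun v tau (Z r γ) = v (r/2) := rfl
@[simp] lemma extFun_W (v : ℕ → ℝ) (tau : ℝ → ℝ) (γ : ℝ) : extFun v tau (W γ) = tau γ := rfl

lemma exists_continuous_extFun (v : ℕ → ℝ) (M : ℝ) (hb : ∀ n, |v n| ≤ M) :
    ∃ tau : ℝ → ℝ, Continuous (extFun v tau) := by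
  have h := fun γ => exists_ulim (U γ) v M hb
  choose tau htau using h
  refine ⟨tau, ?_⟩
  rw [continuous_iff']
  constructor
  · intro r ε hε
    exact ⟨∅, Set.countable_empty, fun γ _ => by simpa using hε⟩
  · intro γ ε hε
    refine ⟨{r | |v (r/2) - tau γ| < ε}, ⟨?_, ?_⟩, ?_⟩
    · refine Filter.mem_of_superset (htau γ ε hε) ?_
      intro n hn
      simp only [Set.mem_setOf_eq] at hn ⊢
      rw [show (2*n)/2 = n by omega]
      exact hn
    · refine Filter.mem_of_superset (htau γ ε hε) ?_
      intro n hn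
      simp only [Set.mem_setOf_eq] at hn ⊢
      rw [show (2*n+1)/2 = n by omega]
      exact hn
    · intro r hr
      simpa using hr

lemma cstar_N1 : CstarEmbedded N1 := by
  rintro f ⟨M, hM⟩
  set v : ℕ → ℝ := fun n => f ⟨H (2*n), ⟨n, rfl⟩⟩ with hv
  have hb : ∀ n, |v n| ≤ M := fun n => hM _
  obtain ⟨tau, hc⟩ := exists_continuous_extFun v M hb
  refine ⟨⟨extFun v tau, hc⟩, ?_⟩
  rintro ⟨x, n, rfl⟩
  show extFun v tau (H (2*n)) = _
  rw [extFun_H, show (2*n)/2 = n by omega]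

lemma cstar_N2 : CstarEmbedded N2 := by
  rintro f ⟨M, hM⟩
  set v : ℕ → ℝ := fun n => f ⟨H (2*n+1), ⟨n, rfl⟩⟩ with hv
  have hb : ∀ n, |v n| ≤ M := fun n => hM _
  obtain ⟨tau, hc⟩ := exists_continuous_extFun v M hb
  refine ⟨⟨extFun v tau, hc⟩, ?_⟩
  rintro ⟨x, n, rfl⟩
  show extFun v tau (H (2*n+1)) = _
  rw [extFun_H, show (2*n+1)/2 = n by omega]

/-! ## The union is not C*-embedded -/

lemma not_cstar_union : ¬ CstarEmbedded (N1 ∪ N2) := by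
  classical
  intro hemb
  haveI : DiscreteTopology (↥(N1 ∪ N2)) := closedCopy_N1N2.2.2.2
  set f : C(↥(N1 ∪ N2), ℝ) :=
    ⟨fun a => if (a : X) ∈ N1 then 0 else 1, continuous_of_discreteTopology⟩ with hf
  have hbdd : ∃ M : ℝ, ∀ a : ↥(N1 ∪ N2), |f a| ≤ M := by
    refine ⟨1, fun a => ?_⟩
    by_cases h : (a : X) ∈ N1 <;> simp [hf, h]
  obtain ⟨g, hg⟩ := hemb f hbdd
  have hg1 : ∀ n, g (H (2*n)) = 0 := by
    intro n
    have := hg ⟨H (2*n), Or.inl ⟨n, rfl⟩⟩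
    rw [this]
    simp only [hf, ContinuousMap.coe_mk]
    rw [if_pos ⟨n, rfl⟩]
  have hg2 : ∀ m, g (H (2*m+1)) = 1 := by
    intro m
    have := hg ⟨H (2*m+1), Or.inr ⟨m, rfl⟩⟩
    rw [this]
    simp only [hf, ContinuousMap.coe_mk]
    rw [if_neg]
    rintro ⟨n, hn⟩
    rw [H_inj] at hn
    omega
  have hcont := continuous_iff'.1 g.continuous
  have h5 : (0:ℝ) < 1/5 := by norm_num
  have hA := fun n => hcont.1 (2*n) (1/5) h5
  have hB := fun m => hcont.1 (2*m+1) (1/5) h5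
  choose sa hsa hva using hA
  choose sb hsb hvb using hB
  obtain ⟨γ, hγ⟩ := exists_not_mem_countable
    (Set.Countable.union (Set.countable_iUnion hsa) (Set.countable_iUnion hsb))
  have hγa : ∀ n, γ ∉ sa n := fun n hn =>
    hγ (Set.mem_union_left _ (Set.mem_iUnion.2 ⟨n, hn⟩))
  have hγb : ∀ m, γ ∉ sb m := fun m hm =>
    hγ (Set.mem_union_right _ (Set.mem_iUnion.2 ⟨m, hm⟩))
  obtain ⟨S, hS, hvw⟩ := hcont.2 γ (1/5) h5
  obtain ⟨n, hn⟩ := hS.exists_even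
  obtain ⟨m, hm⟩ := hS.exists_odd
  have e1 : |g (Z (2*n) γ) - g (H (2*n))| < 1/5 := hva n γ (hγa n)
  have e2 : |g (Z (2*n) γ) - g (W γ)| < 1/5 := hvw _ hn
  have e3 : |g (Z (2*m+1) γ) - g (W γ)| < 1/5 := hvw _ hm
  have e4 : |g (Z (2*m+1) γ) - g (H (2*m+1))| < 1/5 := hvb m γ (hγb m)
  rw [hg1 n] at e1
  rw [hg2 m] at e4
  rw [abs_lt] at e1 e2 e3 e4
  linarith [e1.1, e1.2, e2.1, e2.2, e3.1, e3.2, e4.1, e4.2]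


/-! ## The canonical map into ℝ^{C(X,ℝ)} -/

def e (x : X) : C(X, ℝ) → ℝ := fun g => g x

lemma continuous_e : Continuous e :=
  continuous_pi (fun g => g.continuous)

/-- approximation property of points in the closure of the range of `e` -/
def Approx (p : C(X, ℝ) → ℝ) : Prop :=
  ∀ (L : List C(X, ℝ)) (ε : ℝ), 0 < ε → ∃ x : X, ∀ g ∈ L, |g x - p g| < ε

lemma approx_of_mem_closure {p : C(X, ℝ) → ℝ} (hp : p ∈ closure (Set.range e)) : Approx p := by
  intro L ε hε
  set O : Set (C(X, ℝ) → ℝ) := ⋂ g ∈ {g | g ∈ L}, (fun q : C(X, ℝ) → ℝ => q g) ⁻¹' (Metric.ball (p g) ε)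
    with hO
  have hOopen : IsOpen O := by
    apply Set.Finite.isOpen_biInter (List.finite_toSet L)
    intro g _
    exact (continuous_apply g).isOpen_preimage _ Metric.isOpen_ball
  have hpO : p ∈ O := by
    rw [hO]
    simp only [Set.mem_iInter, Set.mem_preimage, Metric.mem_ball]
    intro g _
    simpa using hε
  obtain ⟨w, hwO, hwr⟩ := mem_closure_iff.1 hp O hOopen hpO
  obtain ⟨x, rfl⟩ := hwr
  refine ⟨x, fun g hg => ?_⟩
  have := Set.mem_iInter₂.1 hwO g hg
  simpa [Real.dist_eq, e] using this

section rules
variable {p : C(X, ℝ) → ℝ} (hp : Approx p)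
include hp

/-- the master rule: `p` commutes with continuous 2-ary operations. -/
lemma p_rule2 (φ : ℝ → ℝ → ℝ) (hφ : Continuous (fun t : ℝ × ℝ => φ t.1 t.2))
    (f g h : C(X, ℝ)) (hh : ∀ x, h x = φ (f x) (g x)) : p h = φ (p f) (p g) := by
  by_contra hne
  set d := |p h - φ (p f) (p g)| with hd
  have hdpos : 0 < d := by
    rw [hd, abs_pos]
    intro hc
    exact hne (by linarith [sub_eq_zero.1 hc])
  obtain ⟨δ, hδpos, hδ⟩ := Metric.continuous_iff.1 hφ (p f, p g) (d/2) (by linarith)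
  obtain ⟨x, hx⟩ := hp [f, g, h] (min δ (d/2)) (by positivity)
  have hxf := hx f (by simp)
  have hxg := hx g (by simp)
  have hxh := hx h (by simp)
  have h1 : dist ((f x, g x) : ℝ × ℝ) (p f, p g) < δ := by
    rw [Prod.dist_eq]
    apply max_lt
    · rw [Real.dist_eq]; exact lt_of_lt_of_le hxf (min_le_left _ _)
    · rw [Real.dist_eq]; exact lt_of_lt_of_le hxg (min_le_left _ _)
  have h2 := hδ _ h1
  rw [Real.dist_eq] at h2
  have h3 : |h x - p h| < d/2 := lt_of_lt_of_le hxh (min_le_right _ _)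
  have htri : |p h - φ (p f) (p g)| ≤ |h x - p h| + |φ (f x) (g x) - φ (p f) (p g)| := by
    have heq : p h - φ (p f) (p g) = -(h x - p h) + (φ (f x) (g x) - φ (p f) (p g)) := by
      rw [hh x]; ring
    rw [heq]
    exact (abs_add_le _ _).trans (by rw [abs_neg])
  have hcon : d < d := by
    calc d = |p h - φ (p f) (p g)| := hd
    _ ≤ |h x - p h| + |φ (f x) (g x) - φ (p f) (p g)| := htri
    _ < d/2 + d/2 := by exact add_lt_add h3 h2
    _ = d := by ring
  exact absurd hcon (lt_irrefl d)

/-- 1-ary version -/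
lemma p_rule1 (φ : ℝ → ℝ) (hφ : Continuous φ)
    (f h : C(X, ℝ)) (hh : ∀ x, h x = φ (f x)) : p h = φ (p f) :=
  p_rule2 hp (fun s _ => φ s) (hφ.comp continuous_fst) f f h hh

lemma p_const (c : ℝ) : p (ContinuousMap.const X c) = c :=
  p_rule1 hp (fun _ => c) continuous_const (ContinuousMap.const X c) _ (fun _ => rfl)

lemma p_add (f g : C(X, ℝ)) : p (f + g) = p f + p g :=
  p_rule2 hp (fun s t => s + t) (by continuity) f g (f + g) (fun x => rfl)

lemma p_mul (f g : C(X, ℝ)) : p (f * g) = p f * p g :=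
  p_rule2 hp (fun s t => s * t) (by continuity) f g (f * g) (fun x => rfl)

lemma p_sub (f g : C(X, ℝ)) : p (f - g) = p f - p g :=
  p_rule2 hp (fun s t => s - t) (by continuity) f g (f - g) (fun x => rfl)

lemma p_nonneg (f : C(X, ℝ)) (hf : ∀ x, 0 ≤ f x) : 0 ≤ p f := by
  have h := p_rule1 hp (fun t => |t|) continuous_abs f f (fun x => (abs_of_nonneg (hf x)).symm)
  rw [h]
  exact abs_nonneg _

lemma p_mono {f g : C(X, ℝ)} (hfg : ∀ x, f x ≤ g x) : p f ≤ p g := by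
  have h := p_nonneg hp (g - f) (fun x => by simpa using hfg x)
  rw [p_sub hp] at h
  linarith

end rules


/-! ## Closure points are evaluations -/

def rhoC : C(X, ℝ) := ⟨rho, continuous_rho⟩
def uC : C(X, ℝ) := ⟨u, continuous_u⟩

@[simp] lemma rhoC_apply (x : X) : rhoC x = rho x := rfl
@[simp] lemma uC_apply (x : X) : uC x = u x := rfl

lemma rho_mem_S (x : X) : rho x = 0 ∨ ∃ r : ℕ, rho x = 1/((r:ℝ)+1) := by
  match x with
  | Sum.inl r => exact Or.inr ⟨r, rfl⟩
  | Sum.inr (Sum.inl (r, γ)) => exact Or.inr ⟨r, rfl⟩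
  | Sum.inr (Sum.inr γ) => exact Or.inl rfl

section caseanalysis
variable {p : C(X, ℝ) → ℝ} (hp : Approx p)
include hp

lemma case_III (ha0 : p rhoC = 0) : ∃ x₀ : X, ∀ g : C(X, ℝ), p g = g x₀ := by
  set x₀ := p uC with hx0
  refine ⟨W x₀, fun g => ?_⟩
  set d : C(X, ℝ) := g - ContinuousMap.const X (p g) with hdd
  set w : C(X, ℝ) := uC - ContinuousMap.const X x₀ with hww
  set F : C(X, ℝ) := d*d + rhoC*rhoC + w*w with hF
  have hpd : p d = 0 := by
    rw [hdd, p_sub hp, p_const hp, sub_self]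
  have hpw : p w = 0 := by
    rw [hww, p_sub hp, p_const hp, ← hx0, sub_self]
  have hpF : p F = 0 := by
    rw [hF, p_add hp, p_add hp, p_mul hp, p_mul hp, p_mul hp, hpd, hpw, ha0]
    ring
  have hzero : ∃ x, F x = 0 := by
    by_contra hc
    push_neg at hc
    set Finv : C(X, ℝ) := ⟨fun x => (F x)⁻¹, F.continuous.inv₀ hc⟩ with hFinv
    have h1 : p (ContinuousMap.const X 1) = p F * p Finv := by
      refine p_rule2 hp (fun s t => s * t) (by continuity) F Finv _ (fun x => ?_)
      simp only [ContinuousMap.const_apply, hFinv, ContinuousMap.coe_mk]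
      rw [mul_inv_cancel₀ (hc x)]
    rw [p_const hp, hpF, zero_mul] at h1
    norm_num at h1
  obtain ⟨y, hy⟩ := hzero
  have hy' : d y * d y + rho y * rho y + w y * w y = 0 := by
    have : F y = d y * d y + rho y * rho y + w y * w y := by
      simp [hF, ContinuousMap.add_apply, ContinuousMap.mul_apply]
    rw [← this, hy]
  have hd0 : d y = 0 := by nlinarith [mul_self_nonneg (d y), mul_self_nonneg (rho y), mul_self_nonneg (w y)]
  have hrho0 : rho y = 0 := by nlinarith [mul_self_nonneg (d y), mul_self_nonneg (rho y), mul_self_nonneg (w y)]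
  have hw0 : w y = 0 := by nlinarith [mul_self_nonneg (d y), mul_self_nonneg (rho y), mul_self_nonneg (w y)]
  -- y must be a W point
  obtain ⟨γ, rfl⟩ : ∃ γ, y = W γ := by
    match y with
    | Sum.inl r =>
      exfalso
      have : rho (H r) = 0 := hrho0
      rw [rho_H] at this
      have := rho_pos_aux r
      linarith
    | Sum.inr (Sum.inl (r, γ)) =>
      exfalso
      have : rho (Z r γ) = 0 := hrho0
      rw [rho_Z] at this
      have := rho_pos_aux r
      linarith
    | Sum.inr (Sum.inr γ) => exact ⟨γ, rfl⟩
  have hγ : γ = x₀ := by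
    have : w (W γ) = 0 := hw0
    simp only [hww, ContinuousMap.sub_apply, ContinuousMap.const_apply, uC_apply, u_W] at this
    linarith
  have hdW : d (W x₀) = 0 := by rw [← hγ]; exact hd0
  simp only [hdd, ContinuousMap.sub_apply, ContinuousMap.const_apply] at hdW
  linarith

lemma case_I (ha0 : p rhoC ≠ 0) (har : ∀ r : ℕ, p rhoC ≠ 1/((r:ℝ)+1)) : False := by
  set a := p rhoC with ha
  have hδex : ∃ δ, 0 < δ ∧ (δ ≤ |0 - a|) ∧ ∀ r : ℕ, δ ≤ |1/((r:ℝ)+1) - a| := by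
    rcases lt_trichotomy a 0 with hneg | hzero | hpos
    · refine ⟨-a, by linarith, by rw [zero_sub, abs_neg, abs_of_neg hneg], fun r => ?_⟩
      have h1 : (0:ℝ) < 1/((r:ℝ)+1) := by positivity
      rw [abs_of_pos (by linarith)]
      linarith
    · exact absurd hzero.symm (Ne.symm ha0)
    · obtain ⟨k, hk⟩ := exists_nat_one_div_lt hpos
      set T : Finset ℕ := Finset.range (k+1) with hT
      have hTne : T.Nonempty := ⟨0, by simp [hT]⟩
      set δ₂ := T.inf' hTne (fun r => |1/((r:ℝ)+1) - a|) with hδ₂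
      have hδ₂pos : 0 < δ₂ := by
        rw [hδ₂, Finset.lt_inf'_iff]
        intro r _
        rw [abs_pos, sub_ne_zero]
        exact fun hc => (har r) hc.symm
      refine ⟨min (a - 1/((k:ℝ)+1)) δ₂, lt_min (by linarith) hδ₂pos, ?_, ?_⟩
      · rw [zero_sub, abs_neg, abs_of_pos hpos]
        have h2 : (0:ℝ) < 1/((k:ℝ)+1) := by positivity
        calc min (a - 1/((k:ℝ)+1)) δ₂ ≤ a - 1/((k:ℝ)+1) := min_le_left _ _
        _ ≤ a := by linarith
      · intro r
        by_cases hrk : r ≤ k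
        · refine le_trans (min_le_right _ _) (Finset.inf'_le _ ?_)
          simp only [hT, Finset.mem_range]
          omega
        · push_neg at hrk
          have h1 : 1/((r:ℝ)+1) ≤ 1/((k:ℝ)+1) := by
            apply one_div_le_one_div_of_le (by positivity)
            have : (k:ℝ) ≤ r := by exact_mod_cast hrk.le
            linarith
          rw [abs_sub_comm, abs_of_pos (by linarith)]
          calc min (a - 1/((k:ℝ)+1)) δ₂ ≤ a - 1/((k:ℝ)+1) := min_le_left _ _
          _ ≤ a - 1/((r:ℝ)+1) := by linarith
  obtain ⟨δ, hδpos, hδ0, hδr⟩ := hδex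
  set φ : ℝ → ℝ := fun t => max 0 (1 - |t - a|/δ) with hφ
  have hφcont : Continuous φ := by
    apply Continuous.max continuous_const
    have h1 : Continuous (fun t : ℝ => |t - a|) := (continuous_id.sub continuous_const).abs
    exact continuous_const.sub (h1.div_const δ)
  have hh : ∀ x : X, (ContinuousMap.const X (0:ℝ)) x = φ (rhoC x) := by
    intro x
    have hge : δ ≤ |rho x - a| := by
      rcases rho_mem_S x with h0 | ⟨r, hr⟩
      · rw [h0]; exact hδ0
      · rw [hr]; exact hδr r
    simp only [ContinuousMap.const_apply, hφ, rhoC_apply]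
    rw [max_eq_left]
    have h2 : (1:ℝ) ≤ |rho x - a|/δ := (one_le_div hδpos).2 hge
    linarith
  have hkey := p_rule1 hp φ hφcont rhoC (ContinuousMap.const X 0) hh
  rw [p_const hp, ← ha] at hkey
  have : φ a = 1 := by
    simp only [hφ, sub_self, abs_zero, zero_div, sub_zero]
    exact max_eq_right zero_le_one
  rw [this] at hkey
  norm_num at hkey

end caseanalysis


/-! ## Case II preliminaries -/

def chiZC (r : ℕ) (γ : ℝ) : C(X, ℝ) :=
  ⟨chi {Z r γ}, continuous_chi (isOpen_singleton_Z r γ) (isClosed_singleton_Z r γ)⟩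

def chiBC (r : ℕ) : C(X, ℝ) :=
  ⟨chi (Anb r ∅), continuous_chi (isOpen_Anb r Set.countable_empty) (isClosed_Anb r ∅)⟩

def chiDC (r : ℕ) {E₀ : Set ℝ} (hE : E₀.Countable) : C(X, ℝ) :=
  ⟨chi (RowSub r E₀), continuous_chi (isOpen_RowSub r E₀) (isClosed_RowSub r hE)⟩

/-- the hat function separation constant -/
lemma hat_sep (r : ℕ) :
    (0 < 1/((r:ℝ)+1) - 1/((r:ℝ)+2)) ∧
    (∀ r' : ℕ, r' ≠ r → 1/((r:ℝ)+1) - 1/((r:ℝ)+2) ≤ |1/((r':ℝ)+1) - 1/((r:ℝ)+1)|) ∧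
    (1/((r:ℝ)+1) - 1/((r:ℝ)+2) ≤ |0 - 1/((r:ℝ)+1)|) := by
  have hr1 : (0:ℝ) < (r:ℝ)+1 := by positivity
  have hr2 : (0:ℝ) < (r:ℝ)+2 := by positivity
  have hδ : (0:ℝ) < 1/((r:ℝ)+1) - 1/((r:ℝ)+2) := by
    rw [sub_pos]
    apply one_div_lt_one_div_of_lt hr1
    linarith
  refine ⟨hδ, ?_, ?_⟩
  · intro r' hne
    rcases lt_or_gt_of_ne hne with hlt | hgt
    · -- r' < r, so r ≥ 1
      have hrpos : 1 ≤ r := by omega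
      have h1 : 1/((r:ℝ)) ≤ 1/((r':ℝ)+1) := by
        apply one_div_le_one_div_of_le (by positivity)
        have : ((r':ℝ)+1) ≤ (r:ℝ) := by exact_mod_cast hlt
        linarith
      have h2 : 1/((r:ℝ)+1) < 1/((r:ℝ)) := by
        apply one_div_lt_one_div_of_lt (by exact_mod_cast hrpos)
        linarith
      rw [abs_of_pos (by linarith)]
      have hr0 : (0:ℝ) < (r:ℝ) := by exact_mod_cast hrpos
      have key : 1/((r:ℝ)) - 1/((r:ℝ)+1) ≥ 1/((r:ℝ)+1) - 1/((r:ℝ)+2) := by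
        have e1 : 1/((r:ℝ)) - 1/((r:ℝ)+1) = 1/((r:ℝ)*((r:ℝ)+1)) := by
          field_simp
          ring
        have e2 : 1/((r:ℝ)+1) - 1/((r:ℝ)+2) = 1/(((r:ℝ)+1)*((r:ℝ)+2)) := by
          field_simp
          ring
        rw [e1, e2]
        apply one_div_le_one_div_of_le (by positivity)
        nlinarith
      linarith
    · -- r' > r
      have h1 : 1/((r':ℝ)+1) ≤ 1/((r:ℝ)+2) := by
        apply one_div_le_one_div_of_le hr2
        have : ((r:ℝ)+1) ≤ (r':ℝ) := by exact_mod_cast hgt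
        linarith
      have h2 : 1/((r:ℝ)+2) < 1/((r:ℝ)+1) := by
        apply one_div_lt_one_div_of_lt hr1
        linarith
      rw [abs_sub_comm, abs_of_pos (by linarith)]
      linarith
  · rw [zero_sub, abs_neg, abs_of_pos (by positivity)]
    have : (0:ℝ) < 1/((r:ℝ)+2) := by positivity
    linarith

section casetwo
variable {p : C(X, ℝ) → ℝ} (hp : Approx p)
include hp

lemma p_zero : p (0 : C(X, ℝ)) = 0 := by
  have := p_rule1 hp (fun _ => (0:ℝ)) continuous_const (0 : C(X, ℝ)) (0 : C(X, ℝ)) (fun x => by simp)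
  simpa using this

lemma p_chiB_one {r : ℕ} (hr : p rhoC = 1/((r:ℝ)+1)) : p (chiBC r) = 1 := by
  obtain ⟨hδpos, hsep, hsep0⟩ := hat_sep r
  set a : ℝ := 1/((r:ℝ)+1) with haa
  set δ : ℝ := 1/((r:ℝ)+1) - 1/((r:ℝ)+2) with hδδ
  set φ : ℝ → ℝ := fun t => max 0 (1 - |t - a|/δ) with hφ
  have hφcont : Continuous φ := by
    apply Continuous.max continuous_const
    exact continuous_const.sub (((continuous_id.sub continuous_const).abs).div_const δ)
  have hφ1 : φ a = 1 := by
    simp only [hφ, sub_self, abs_zero, zero_div, sub_zero]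
    exact max_eq_right zero_le_one
  have hφ0 : ∀ t : ℝ, δ ≤ |t - a| → φ t = 0 := by
    intro t ht
    simp only [hφ]
    rw [max_eq_left]
    have h2 : (1:ℝ) ≤ |t - a|/δ := (one_le_div hδpos).2 ht
    linarith
  have hh : ∀ x : X, (chiBC r) x = φ (rhoC x) := by
    intro x
    match x with
    | Sum.inl r' =>
      show chi (Anb r ∅) (H r') = φ (rho (H r'))
      by_cases hrr : r' = r
      · subst hrr
        rw [chi_of_mem (H_mem_Anb r' ∅), rho_H, ← haa, hφ1]
      · rw [chi_of_not_mem, rho_H, hφ0 _ (hsep r' hrr)]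
        intro hc
        rcases hc with hc | ⟨γ, _, hc⟩
        · rw [H_inj] at hc; exact hrr hc
        · exact absurd hc (by simp)
    | Sum.inr (Sum.inl (r', γ)) =>
      show chi (Anb r ∅) (Z r' γ) = φ (rho (Z r' γ))
      by_cases hrr : r' = r
      · subst hrr
        rw [chi_of_mem (Z_mem_Anb.2 ⟨rfl, Set.notMem_empty γ⟩), rho_Z, ← haa, hφ1]
      · rw [chi_of_not_mem, rho_Z, hφ0 _ (hsep r' hrr)]
        intro hc
        exact hrr (Z_mem_Anb.1 hc).1
    | Sum.inr (Sum.inr γ) =>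
      show chi (Anb r ∅) (W γ) = φ (rho (W γ))
      rw [chi_of_not_mem, rho_W, hφ0 _ hsep0]
      intro hc
      rcases hc with hc | ⟨γ', _, hc⟩
      · exact absurd hc (by simp)
      · exact absurd hc (by simp)
  have hkey := p_rule1 hp φ hφcont rhoC (chiBC r) hh
  rw [hr] at hkey
  rw [hkey, hφ1]

lemma p_chi_dichotomy {C : Set X} (ho : IsOpen C) (hc : IsClosed C) :
    p ⟨chi C, continuous_chi ho hc⟩ = 0 ∨ p ⟨chi C, continuous_chi ho hc⟩ = 1 := by
  classical
  set χ : C(X, ℝ) := ⟨chi C, continuous_chi ho hc⟩ with hχ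
  have hsq : p (χ * χ) = p χ * p χ := p_mul hp χ χ
  have heq : χ * χ = χ := by
    ext x
    show chi C x * chi C x = chi C x
    by_cases hx : x ∈ C <;> simp [hx]
  rw [heq] at hsq
  have : p χ * (p χ - 1) = 0 := by ring_nf; linarith [hsq]
  rcases mul_eq_zero.1 this with h | h
  · exact Or.inl h
  · exact Or.inr (by linarith [sub_eq_zero.1 h])

lemma eval_of_chiZ_one {r : ℕ} {γ : ℝ} (h1 : p (chiZC r γ) = 1) :
    ∀ g : C(X, ℝ), p g = g (Z r γ) := by
  intro g
  set χ : C(X, ℝ) := chiZC r γ with hχ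
  have e1 : p (g * χ) = p g * p χ := p_mul hp g χ
  have e2 : p (g * χ) = g (Z r γ) * p χ := by
    refine p_rule1 hp (fun t => g (Z r γ) * t) (by continuity) χ (g * χ) (fun x => ?_)
    show g x * chi {Z r γ} x = g (Z r γ) * chi {Z r γ} x
    by_cases hx : x ∈ ({Z r γ} : Set X)
    · have : x = Z r γ := hx
      rw [this]
    · rw [chi_of_not_mem hx, mul_zero, mul_zero]
  rw [h1, mul_one] at e1 e2
  rw [← e1, e2]

end casetwo


/-! ## the unbounded killer function -/

open Classical in
noncomputable def psiFun (r : ℕ) (E₀ : Set ℝ) (ι : ↥E₀ → ℕ) : X → ℝ :=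
  Sum.elim (fun _ => 0)
    (Sum.elim (fun pr => if h : pr.1 = r ∧ pr.2 ∈ E₀ then (ι ⟨pr.2, h.2⟩ : ℝ) else 0)
      (fun _ => 0))

lemma psiFun_H (r : ℕ) (E₀ : Set ℝ) (ι : ↥E₀ → ℕ) (r' : ℕ) : psiFun r E₀ ι (H r') = 0 := rfl
lemma psiFun_W (r : ℕ) (E₀ : Set ℝ) (ι : ↥E₀ → ℕ) (γ : ℝ) : psiFun r E₀ ι (W γ) = 0 := rfl

lemma psiFun_Z_mem (r : ℕ) (E₀ : Set ℝ) (ι : ↥E₀ → ℕ) {γ : ℝ} (h : γ ∈ E₀) :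
    psiFun r E₀ ι (Z r γ) = (ι ⟨γ, h⟩ : ℝ) := by
  unfold psiFun Z
  rw [Sum.elim_inr, Sum.elim_inl]
  rw [dif_pos ⟨rfl, h⟩]

lemma psiFun_Z_ne (r : ℕ) (E₀ : Set ℝ) (ι : ↥E₀ → ℕ) {r' : ℕ} {γ : ℝ}
    (h : ¬ (r' = r ∧ γ ∈ E₀)) : psiFun r E₀ ι (Z r' γ) = 0 := by
  unfold psiFun Z
  rw [Sum.elim_inr, Sum.elim_inl]
  rw [dif_neg h]

lemma continuous_psiFun (r : ℕ) {E₀ : Set ℝ} (hE : E₀.Countable) (ι : ↥E₀ → ℕ) :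
    Continuous (psiFun r E₀ ι) := by
  rw [continuous_iff']
  constructor
  · intro r' ε hε
    refine ⟨E₀, hE, fun γ hγ => ?_⟩
    rw [psiFun_Z_ne r E₀ ι (fun hc => hγ hc.2), psiFun_H]
    simpa using hε
  · intro γ ε hε
    refine ⟨Set.univ \ {r}, (Wgood.univ γ).diff_finite (Set.finite_singleton r), fun r' hr' => ?_⟩
    rw [psiFun_Z_ne r E₀ ι (fun hc => hr'.2 hc.1), psiFun_W]
    simpa using hε

section casetwob
variable {p : C(X, ℝ) → ℝ} (hp : Approx p)
include hp

lemma p_chiD_zero {r : ℕ} {E₀ : Set ℝ} (hE : E₀.Countable)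
    (hβ : ∀ γ : ℝ, p (chiZC r γ) = 0) : p (chiDC r hE) = 0 := by
  classical
  rcases p_chi_dichotomy hp (isOpen_RowSub r E₀) (isClosed_RowSub r hE) with h0 | h1
  · exact h0
  · exfalso
    obtain ⟨ι, hι⟩ := Set.countable_iff_exists_injective.1 hE
    set ψC : C(X, ℝ) := ⟨psiFun r E₀ ι, continuous_psiFun r hE ι⟩ with hψ
    obtain ⟨K, hK⟩ := exists_nat_gt (p ψC)
    set Efin : Set ℝ := {γ | ∃ h : γ ∈ E₀, ι ⟨γ, h⟩ ≤ K} with hEfin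
    have hEfinite : Efin.Finite := by
      have h1 : {y : ↥E₀ | ι y ≤ K}.Finite := by
        have : {y : ↥E₀ | ι y ≤ K} = ι ⁻¹' (Set.Iic K) := rfl
        rw [this]
        exact Set.Finite.preimage hι.injOn (Set.finite_Iic K)
      refine Set.Finite.subset (h1.image (fun y : ↥E₀ => (y : ℝ))) ?_
      rintro γ ⟨h, hle⟩
      exact ⟨⟨γ, h⟩, hle, rfl⟩
    set T : Finset ℝ := hEfinite.toFinset with hT
    set χfin : C(X, ℝ) := chiDC r hEfinite.countable with hχfin
    have hsumzero : ∀ (T' : Finset ℝ), p (∑ γ ∈ T', chiZC r γ) = 0 := by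
      intro T'
      induction T' using Finset.induction with
      | empty => simpa using p_zero hp
      | @insert a s hx ih =>
        rw [Finset.sum_insert hx, p_add hp, ih, hβ _, add_zero]
    have hχfineq : χfin = ∑ γ ∈ T, chiZC r γ := by
      ext x
      rw [ContinuousMap.coe_sum, Finset.sum_apply]
      show chi (RowSub r Efin) x = _
      by_cases hx : x ∈ RowSub r Efin
      · obtain ⟨γ₀, hγ₀, rfl⟩ := hx
        rw [chi_of_mem (⟨γ₀, hγ₀, rfl⟩ : Z r γ₀ ∈ RowSub r Efin)]
        rw [Finset.sum_eq_single γ₀]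
        · show (1:ℝ) = chi {Z r γ₀} (Z r γ₀)
          exact (chi_of_mem (Set.mem_singleton _)).symm
        · intro δ _ hδne
          show chi {Z r δ} (Z r γ₀) = 0
          apply chi_of_not_mem
          intro hc
          have : Z r γ₀ = Z r δ := hc
          rw [Z_inj] at this
          exact hδne this.2.symm
        · intro hc
          exfalso
          exact hc (by rw [hT, Set.Finite.mem_toFinset]; exact hγ₀)
      · rw [chi_of_not_mem hx]
        symm
        apply Finset.sum_eq_zero
        intro δ hδ
        show chi {Z r δ} x = 0
        apply chi_of_not_mem
        intro hc
        have hxz : x = Z r δ := hc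
        apply hx
        rw [hxz]
        exact ⟨δ, by rwa [hT, Set.Finite.mem_toFinset] at hδ, rfl⟩
    have hχfin0 : p χfin = 0 := by rw [hχfineq]; exact hsumzero T
    set η : C(X, ℝ) := ⟨fun x => min (max (ψC x - K) 0) 1, by
      apply Continuous.min ?_ continuous_const
      apply Continuous.max ?_ continuous_const
      exact (ψC.continuous.sub continuous_const)⟩ with hη
    have hη0 : p η = 0 := by
      have hrule := p_rule1 hp (fun t => min (max (t - K) 0) 1)
        (by
          apply Continuous.min ?_ continuous_const
          apply Continuous.max ?_ continuous_const
          exact continuous_id.sub continuous_const) ψC η (fun x => rfl)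
      rw [hrule]
      show min (max (p ψC - K) 0) 1 = 0
      rw [max_eq_right (by linarith), min_eq_left zero_le_one]
    have hηnonneg : ∀ x, 0 ≤ η x := by
      intro x
      show 0 ≤ min (max (ψC x - K) 0) 1
      exact le_min (le_max_right _ _) zero_le_one
    have hbd : ∀ x, (chiDC r hE) x ≤ χfin x + η x := by
      intro x
      by_cases hx : x ∈ RowSub r E₀
      · obtain ⟨γ, hγ, rfl⟩ := hx
        show chi (RowSub r E₀) (Z r γ) ≤ chi (RowSub r Efin) (Z r γ) + η (Z r γ)
        rw [chi_of_mem (⟨γ, hγ, rfl⟩ : Z r γ ∈ RowSub r E₀)]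
        by_cases hK' : ι ⟨γ, hγ⟩ ≤ K
        · rw [chi_of_mem (⟨γ, ⟨hγ, hK'⟩, rfl⟩ : Z r γ ∈ RowSub r Efin)]
          linarith [hηnonneg (Z r γ)]
        · have hψval : ψC (Z r γ) = (ι ⟨γ, hγ⟩ : ℝ) := psiFun_Z_mem r E₀ ι hγ
          have hge : (K:ℝ) + 1 ≤ ψC (Z r γ) := by
            rw [hψval]
            exact_mod_cast Nat.succ_le_of_lt (Nat.lt_of_not_le hK')
          have hηval : η (Z r γ) = 1 := by
            show min (max (ψC (Z r γ) - K) 0) 1 = 1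
            rw [max_eq_left (by linarith), min_eq_right (by linarith)]
          rw [hηval]
          linarith [chi_nonneg (RowSub r Efin) (Z r γ)]
      · show chi (RowSub r E₀) x ≤ _
        rw [chi_of_not_mem hx]
        have := chi_nonneg (RowSub r Efin) x
        have := hηnonneg x
        show (0:ℝ) ≤ χfin x + η x
        have hfx : χfin x = chi (RowSub r Efin) x := rfl
        linarith [chi_nonneg (RowSub r Efin) x, hηnonneg x]
    have hmono := p_mono hp (f := chiDC r hE) (g := χfin + η) (by
      intro x
      rw [ContinuousMap.add_apply]
      exact hbd x)
    rw [p_add hp, hχfin0, hη0] at hmono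
    have h1' : p (chiDC r hE) = 1 := h1
    rw [h1'] at hmono
    linarith

lemma case_II_beta {r : ℕ} (hr : p rhoC = 1/((r:ℝ)+1))
    (hβ : ∀ γ : ℝ, p (chiZC r γ) = 0) : ∀ g : C(X, ℝ), p g = g (H r) := by
  have hB1 : p (chiBC r) = 1 := p_chiB_one hp hr
  have key : ∀ g' : C(X, ℝ), (∀ x, |g' x| ≤ 2) → p g' = g' (H r) := by
    intro g' hg'
    set c := g' (H r) with hc
    have habs : ∀ ε : ℝ, 0 < ε → |p g' - c| ≤ ε := by
      intro ε hε
      obtain ⟨s, hs, hval⟩ := continuousAt_H_iff.1 (g'.continuous.continuousAt) ε hε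
      set E₀ : Set ℝ := {γ | γ ∈ s ∧ ¬ (|g' (Z r γ) - c| < ε)} with hE₀
      have hE₀c : E₀.Countable := hs.mono (fun γ h => h.1)
      have hE₀val : ∀ γ, γ ∉ E₀ → |g' (Z r γ) - c| < ε := by
        intro γ hγ
        by_cases hγs : γ ∈ s
        · by_contra hcon
          exact hγ ⟨hγs, hcon⟩
        · exact hval γ hγs
      have hD0 : p (chiDC r hE₀c) = 0 := p_chiD_zero hp hE₀c hβ
      set χB : C(X, ℝ) := chiBC r with hχB
      set χD : C(X, ℝ) := chiDC r hE₀c with hχD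
      set A : C(X, ℝ) := g' * χB - ContinuousMap.const X c * χB with hA
      set Bd : C(X, ℝ) := ContinuousMap.const X ε * χB + ContinuousMap.const X 4 * χD with hBd
      have hpA : p A = p g' - c := by
        rw [hA, p_sub hp, p_mul hp, p_mul hp, p_const hp, hB1, mul_one, mul_one]
      have hpBd : p Bd = ε := by
        rw [hBd, p_add hp, p_mul hp, p_mul hp, p_const hp, p_const hp, hB1, hD0,
          mul_one, mul_zero, add_zero]
      have hbound : ∀ x, |A x| ≤ Bd x := by
        intro x
        have hAx : A x = (g' x - c) * chi (Anb r ∅) x := by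
          show g' x * chi (Anb r ∅) x - c * chi (Anb r ∅) x = _
          ring
        have hBdx : Bd x = ε * chi (Anb r ∅) x + 4 * chi (RowSub r E₀) x := rfl
        rw [hAx, hBdx]
        by_cases hxB : x ∈ Anb r ∅
        · rw [chi_of_mem hxB, mul_one, mul_one]
          rcases hxB with hxH | ⟨γ, _, hxZ⟩
          · rw [hxH]
            simp only [← hc, sub_self, abs_zero]
            have := chi_nonneg (RowSub r E₀) (H r)
            linarith
          · rw [hxZ]
            by_cases hγE : γ ∈ E₀
            · rw [chi_of_mem (⟨γ, hγE, rfl⟩ : Z r γ ∈ RowSub r E₀)]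
              have h1 : |g' (Z r γ) - c| ≤ 4 := by
                have h2 := hg' (Z r γ)
                have h3 := hg' (H r)
                rw [← hc] at *
                calc |g' (Z r γ) - c| ≤ |g' (Z r γ)| + |c| := abs_sub _ _
                _ ≤ 2 + 2 := by rw [hc]; exact add_le_add h2 h3
                _ = 4 := by norm_num
              linarith
            · have := hE₀val γ hγE
              have := chi_nonneg (RowSub r E₀) (Z r γ)
              linarith [le_of_lt (hE₀val γ hγE),
                mul_nonneg (by norm_num : (0:ℝ) ≤ 4) (chi_nonneg (RowSub r E₀) (Z r γ))]
        · rw [chi_of_not_mem hxB, mul_zero, mul_zero, abs_zero]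
          have := chi_nonneg (RowSub r E₀) x
          linarith
      have hup : p A ≤ ε := by
        rw [← hpBd]
        apply p_mono hp
        intro x
        exact le_trans (le_abs_self _) (hbound x)
      have hdown : -ε ≤ p A := by
        have h1 : p (A + Bd) = p A + ε := by rw [p_add hp, hpBd]
        have h2 : 0 ≤ p (A + Bd) := by
          apply p_nonneg hp
          intro x
          rw [ContinuousMap.add_apply]
          have := hbound x
          have := neg_abs_le (A x)
          linarith
        linarith
      rw [hpA] at hup hdown
      rw [abs_le]
      exact ⟨by linarith, hup⟩
    have : |p g' - c| ≤ 0 := by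
      by_contra hcon
      push_neg at hcon
      have := habs (|p g' - c|/2) (by linarith)
      linarith
    have := abs_nonneg (p g' - c)
    have heq : |p g' - c| = 0 := le_antisymm ‹|p g' - c| ≤ 0› this
    rw [abs_eq_zero, sub_eq_zero] at heq
    exact heq
  intro g
  set gb : C(X, ℝ) := ⟨fun x => Real.arctan (g x), Real.continuous_arctan.comp g.continuous⟩
    with hgb
  have h1 : p gb = Real.arctan (p g) :=
    p_rule1 hp Real.arctan Real.continuous_arctan g gb (fun x => rfl)
  have h2 : p gb = gb (H r) := by
    apply key
    intro x
    show |Real.arctan (g x)| ≤ 2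
    have h1 := Real.arctan_lt_pi_div_two (g x)
    have h2 := Real.neg_pi_div_two_lt_arctan (g x)
    have hπ : Real.pi < 4 := by
      have := Real.pi_lt_d2
      linarith
    rw [abs_le]
    constructor <;> linarith
  have h3 : Real.arctan (p g) = Real.arctan (g (H r)) := by
    rw [← h1, h2]
    rfl
  exact Real.arctan_injective h3

end casetwob


/-! ## Assembly: e is a closed embedding -/

theorem approx_eval {p : C(X, ℝ) → ℝ} (hp : Approx p) :
    ∃ x₀ : X, ∀ g : C(X, ℝ), p g = g x₀ := by
  by_cases ha0 : p rhoC = 0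
  · exact case_III hp ha0
  · by_cases har : ∃ r : ℕ, p rhoC = 1/((r:ℝ)+1)
    · obtain ⟨r, hr⟩ := har
      by_cases hα : ∃ γ : ℝ, p (chiZC r γ) = 1
      · obtain ⟨γ, hγ⟩ := hα
        exact ⟨Z r γ, eval_of_chiZ_one hp hγ⟩
      · push_neg at hα
        have hβ : ∀ γ, p (chiZC r γ) = 0 := by
          intro γ
          rcases p_chi_dichotomy hp (isOpen_singleton_Z r γ) (isClosed_singleton_Z r γ)
            with h | h
          · exact h
          · exact absurd h (hα γ)
        exact ⟨H r, case_II_beta hp hr hβ⟩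
    · push_neg at har
      exact absurd (case_I hp ha0 har) not_false

lemma isClosed_range_e : IsClosed (Set.range e) := by
  rw [← closure_subset_iff_isClosed]
  intro p hpcl
  obtain ⟨x₀, hx₀⟩ := approx_eval (approx_of_mem_closure hpcl)
  exact ⟨x₀, funext (fun g => (hx₀ g).symm)⟩

lemma e_injective : Function.Injective e := by
  intro x y hxy
  have hval : ∀ g : C(X, ℝ), g x = g y := fun g => congrFun hxy g
  have hrinj : ∀ r r' : ℕ, (1:ℝ)/((r:ℝ)+1) = 1/((r':ℝ)+1) → r = r' := by
    intro r r' hrr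
    have h1 : ((r:ℝ)+1) ≠ 0 := by positivity
    have h2 : ((r':ℝ)+1) ≠ 0 := by positivity
    rw [div_eq_div_iff h1 h2] at hrr
    have : ((r:ℝ)) = ((r':ℝ)) := by linarith
    exact_mod_cast this
  match x, y with
  | Sum.inl r, Sum.inl r' =>
    have h : (1:ℝ)/((r:ℝ)+1) = 1/((r':ℝ)+1) := hval rhoC
    rw [hrinj r r' h]
  | Sum.inl r, Sum.inr (Sum.inl (r', γ)) =>
    exfalso
    have h : chi {Z r' γ} (H r) = chi {Z r' γ} (Z r' γ) := hval (chiZC r' γ)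
    rw [chi_of_not_mem (by simp), chi_of_mem (Set.mem_singleton _)] at h
    norm_num at h
  | Sum.inl r, Sum.inr (Sum.inr γ) =>
    exfalso
    have h : rho (H r) = rho (W γ) := hval rhoC
    rw [rho_H, rho_W] at h
    have := rho_pos_aux r
    linarith
  | Sum.inr (Sum.inl (r, γ)), Sum.inl r' =>
    exfalso
    have h : chi {Z r γ} (Z r γ) = chi {Z r γ} (H r') := hval (chiZC r γ)
    rw [chi_of_mem (Set.mem_singleton _), chi_of_not_mem (by simp)] at h
    norm_num at h
  | Sum.inr (Sum.inl (r, γ)), Sum.inr (Sum.inl (r', γ'))  =>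
    have h : chi {Z r γ} (Z r γ) = chi {Z r γ} (Z r' γ') := hval (chiZC r γ)
    rw [chi_of_mem (Set.mem_singleton _)] at h
    by_cases hzz : Z r' γ' ∈ ({Z r γ} : Set X)
    · have hzz' : Z r' γ' = Z r γ := hzz
      rw [Z_inj] at hzz'
      show Z r γ = Z r' γ'
      rw [Z_inj]
      exact ⟨hzz'.1.symm, hzz'.2.symm⟩
    · exfalso
      rw [chi_of_not_mem hzz] at h
      norm_num at h
  | Sum.inr (Sum.inl (r, γ)), Sum.inr (Sum.inr γ') =>
    exfalso
    have h : chi {Z r γ} (Z r γ) = chi {Z r γ} (W γ') := hval (chiZC r γ)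
    rw [chi_of_mem (Set.mem_singleton _), chi_of_not_mem (by simp [eq_comm])] at h
    norm_num at h
  | Sum.inr (Sum.inr γ), Sum.inl r =>
    exfalso
    have h : rho (W γ) = rho (H r) := hval rhoC
    rw [rho_H, rho_W] at h
    have := rho_pos_aux r
    linarith
  | Sum.inr (Sum.inr γ), Sum.inr (Sum.inl (r, γ')) =>
    exfalso
    have h : chi {Z r γ'} (W γ) = chi {Z r γ'} (Z r γ') := hval (chiZC r γ')
    rw [chi_of_not_mem (by simp [eq_comm]), chi_of_mem (Set.mem_singleton _)] at h
    norm_num at h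
  | Sum.inr (Sum.inr γ), Sum.inr (Sum.inr γ') =>
    have h : u (W γ) = u (W γ') := hval uC
    rw [u_W, u_W] at h
    show W γ = W γ'
    rw [W_inj]
    exact h

lemma nhds_basis_clopen (x : X) {t : Set X} (ht : t ∈ 𝓝 x) :
    ∃ U : Set X, IsOpen U ∧ IsClosed U ∧ x ∈ U ∧ U ⊆ t := by
  match x with
  | Sum.inl r =>
    obtain ⟨s, hs, hsub⟩ := mem_nhds_H.1 ht
    exact ⟨Anb r s, isOpen_Anb r hs, isClosed_Anb r s, H_mem_Anb r s, hsub⟩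
  | Sum.inr (Sum.inl (r, γ)) =>
    refine ⟨{Z r γ}, isOpen_singleton_Z r γ, isClosed_singleton_Z r γ, rfl, ?_⟩
    intro y hy
    have : y = Z r γ := hy
    rw [this]
    exact mem_of_mem_nhds ht
  | Sum.inr (Sum.inr γ) =>
    obtain ⟨S, hS, hsub⟩ := mem_nhds_W.1 ht
    exact ⟨Wnb γ S, isOpen_Wnb γ hS, isClosed_Wnb γ S, W_mem_Wnb γ S, hsub⟩

lemma e_inducing : IsInducing e := by
  rw [isInducing_iff_nhds]
  intro x
  apply le_antisymm
  · exact Filter.map_le_iff_le_comap.1 (continuous_e.tendsto x)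
  · intro t ht
    obtain ⟨U, hUo, hUc, hxU, hUt⟩ := nhds_basis_clopen x ht
    set χU : C(X, ℝ) := ⟨chi U, continuous_chi hUo hUc⟩ with hχU
    rw [Filter.mem_comap]
    refine ⟨(fun q : C(X, ℝ) → ℝ => q χU) ⁻¹' (Metric.ball 1 (1/2)), ?_, ?_⟩
    · have hval : e x χU = 1 := chi_of_mem hxU
      have hb : Metric.ball (1:ℝ) (1/2) ∈ 𝓝 (e x χU) := by
        rw [hval]
        exact Metric.ball_mem_nhds _ (by norm_num)
      exact (continuous_apply χU).continuousAt.preimage_mem_nhds hb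
    · intro y hy
      simp only [Set.mem_preimage, Metric.mem_ball, Real.dist_eq, e] at hy
      apply hUt
      by_contra hyU
      rw [show (χU y : ℝ) = chi U y from rfl, chi_of_not_mem hyU] at hy
      norm_num at hy

lemma e_isClosedEmbedding : Topology.IsClosedEmbedding e :=
  ⟨⟨e_inducing, e_injective⟩, isClosed_range_e⟩

lemma realcompact_X : Realcompact X := ⟨C(X, ℝ), e, e_isClosedEmbedding⟩

lemma t2_X : T2Space X := e_isClosedEmbedding.toIsEmbedding.t2Space

lemma completelyRegular_X : CompletelyRegularSpace X := by
  constructor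
  intro x K hK hxK
  obtain ⟨U, hUo, hUc, hxU, hUt⟩ := nhds_basis_clopen x (hK.isOpen_compl.mem_nhds hxK)
  refine ⟨fun y => Set.projIcc 0 1 zero_le_one (1 - chi U y), ?_, ?_, ?_⟩
  · exact continuous_projIcc.comp (continuous_const.sub (continuous_chi hUo hUc))
  · apply Subtype.ext
    rw [Set.coe_projIcc]
    rw [chi_of_mem hxU]
    norm_num
  · intro y hyK
    have hyU : y ∉ U := fun hy => (hUt hy) hyK
    apply Subtype.ext
    rw [Set.coe_projIcc, chi_of_not_mem hyU]
    norm_num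

end St19


/-- There is a realcompact Tychonoff space `X` with closed copies `N₁, N₂`
of `ℕ`, each C*-embedded in `X`, neither meeting the closure of the other (so `N₁ ∪ N₂` is a
closed copy of `ℕ`), whose union is not C*-embedded in `X`. -/
theorem statement19 :
    ∃ (X : Type) (_ : TopologicalSpace X),
      T2Space X ∧ CompletelyRegularSpace X ∧ Realcompact X ∧
      ∃ N₁ N₂ : Set X,
        ClosedCopyOfNat N₁ ∧ ClosedCopyOfNat N₂ ∧
        CstarEmbedded N₁ ∧ CstarEmbedded N₂ ∧
        N₁ ∩ closure N₂ = ∅ ∧ N₂ ∩ closure N₁ = ∅ ∧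
        ClosedCopyOfNat (N₁ ∪ N₂) ∧
        ¬ CstarEmbedded (N₁ ∪ N₂) := by
  refine ⟨St19.X, inferInstance, St19.t2_X, St19.completelyRegular_X, St19.realcompact_X,
    St19.N1, St19.N2, St19.closedCopy_N1, St19.closedCopy_N2, St19.cstar_N1, St19.cstar_N2,
    St19.N1_inter_closure_N2, St19.N2_inter_closure_N1, St19.closedCopy_N1N2,
    St19.not_cstar_union⟩
end
end
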